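/- arXiv:2004.05252 — 5 statements merged into one kernel-verified Lean document; each statement's English description precedes it below -/
import Mathlib

section
/- Let N = 3 and suppose the coupling strength satisfies κ > (√(138+22√33)/4)·D(Ω) (≈ 4.0649·D(Ω)). Then for every initial phase vector Θ⁰ ∈ ℝ³, the Kuramoto solution θ with θ(0) = Θ⁰ exhibits complete phase-locking: for every pair of indices i, j, the limit lim_{t→∞}(θ_i(t) − θ_j(t)) exists and is finite. -/
open Real Set Filter

/-- A Kuramoto solution on `[0,∞)` (modeled as a function on ℝ whose ODE holds on `Set.Ici 0`). -/
def IsKuramotoOn {N : ℕ} (κ : ℝ) (ν : Fin N → ℝ) (θ : ℝ → Fin N → ℝ) : Prop :=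
  ∀ (i : Fin N), ∀ t ∈ Set.Ici (0 : ℝ), HasDerivWithinAt (fun s => θ s i)
    (ν i + κ / N * ∑ j, Real.sin (θ t j - θ t i)) (Set.Ici 0) t

/-- Diameter of natural frequencies `D(Ω) = max_{i,j} |νᵢ − νⱼ|`. -/
noncomputable def freqDiam {N : ℕ} (ν : Fin N → ℝ) : ℝ :=
  sSup {d : ℝ | ∃ i : Fin N, ∃ j : Fin N, d = |ν i - ν j|}


/-- Monotonicity helper: if `f` has nonpositive derivative (within `Ici 0`) on `[a,b]`,
then `f b ≤ f a`. -/
lemma le_of_deriv_nonpos_Icc (f g : ℝ → ℝ)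
    (hf : ∀ t ∈ Set.Ici (0:ℝ), HasDerivWithinAt f (g t) (Set.Ici 0) t)
    {a b : ℝ} (ha : 0 ≤ a) (hab : a ≤ b)
    (hg : ∀ t ∈ Set.Icc a b, g t ≤ 0) : f b ≤ f a := by
  have hD : ∀ t ∈ Set.Ioo a b, HasDerivAt f (g t) t := by
    intro t ht
    have h0 : (0:ℝ) < t := lt_of_le_of_lt ha ht.1
    exact (hf t (le_of_lt h0)).hasDerivAt (Ici_mem_nhds h0)
  have hcont : ContinuousOn f (Set.Icc a b) := by
    intro t ht
    exact ((hf t (le_trans ha ht.1)).continuousWithinAt).mono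
      (fun s hs => le_trans ha hs.1)
  have hanti : AntitoneOn f (Set.Icc a b) := by
    apply antitoneOn_of_deriv_nonpos (convex_Icc a b) hcont
    · intro t ht
      rw [interior_Icc] at ht
      exact ((hD t ht).differentiableAt).differentiableWithinAt
    · intro t ht
      rw [interior_Icc] at ht
      rw [(hD t ht).deriv]
      exact hg t (Set.mem_Icc_of_Ioo ht)
  exact hanti (Set.left_mem_Icc.2 hab) (Set.right_mem_Icc.2 hab) hab

/-- Barrier lemma: a function on `[0,∞)` starting below `B` with strictly negative
derivative whenever it touches `B` stays below `B`. -/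
lemma barrier (f g : ℝ → ℝ)
    (hf : ∀ t ∈ Set.Ici (0:ℝ), HasDerivWithinAt f (g t) (Set.Ici 0) t)
    {B : ℝ} (h0 : f 0 < B)
    (hbar : ∀ t ∈ Set.Ici (0:ℝ), f t = B → g t < 0) :
    ∀ t ∈ Set.Ici (0:ℝ), f t < B := by
  by_contra hcon
  push_neg at hcon
  obtain ⟨t₀, ht₀, hfB⟩ := hcon
  have hcont : ContinuousOn f (Set.Ici 0) := fun t ht => (hf t ht).continuousWithinAt
  set S : Set ℝ := {t | 0 ≤ t ∧ B ≤ f t} with hS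
  have hSne : S.Nonempty := ⟨t₀, ht₀, hfB⟩
  have hSbdd : BddBelow S := ⟨0, fun s hs => hs.1⟩
  have hSclosed : IsClosed S := by
    have : S = Set.Ici 0 ∩ f ⁻¹' (Set.Ici B) := rfl
    rw [this]
    exact ContinuousOn.preimage_isClosed_of_isClosed hcont isClosed_Ici isClosed_Ici
  set t₁ := sInf S with ht₁def
  have ht₁S : t₁ ∈ S := hSclosed.csInf_mem hSne hSbdd
  have ht₁0 : 0 ≤ t₁ := ht₁S.1
  have hlt : ∀ t, 0 ≤ t → t < t₁ → f t < B := by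
    intro t h0t htlt
    by_contra h
    push_neg at h
    exact absurd (csInf_le hSbdd ⟨h0t, h⟩) (not_le.2 htlt)
  have ht₁pos : 0 < t₁ := by
    rcases eq_or_lt_of_le ht₁0 with h | h
    · exfalso; have := ht₁S.2; rw [← h] at this; linarith
    · exact h
  -- f t₁ = B
  have hft₁ : f t₁ = B := by
    by_contra hne
    have hgt : B < f t₁ := lt_of_le_of_ne ht₁S.2 (by intro h; exact hne h.symm)
    have hc : ContinuousAt f t₁ :=
      (hf t₁ ht₁0).continuousWithinAt.continuousAt (Ici_mem_nhds ht₁pos)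
    have hev : ∀ᶠ t in nhds t₁, B < f t := hc (Ioi_mem_nhds hgt)
    have hev2 : ∀ᶠ t in nhdsWithin t₁ (Set.Iio t₁), B < f t := hev.filter_mono nhdsWithin_le_nhds
    have hev3 : ∀ᶠ t in nhdsWithin t₁ (Set.Iio t₁), 0 < t ∧ t < t₁ := by
      have : Set.Ioo (0:ℝ) t₁ ∈ nhdsWithin t₁ (Set.Iio t₁) :=
        Ioo_mem_nhdsLT_of_mem ⟨ht₁pos, le_refl _⟩
      exact eventually_of_mem this (fun t ht => ⟨ht.1, ht.2⟩)
    have : ∀ᶠ t in nhdsWithin t₁ (Set.Iio t₁), False := by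
      filter_upwards [hev2, hev3] with t h1 h2
      exact absurd (hlt t (le_of_lt h2.1) h2.2) (not_lt.2 (le_of_lt h1))
    obtain ⟨_, hfalse⟩ := this.exists
    exact hfalse
  have hg1 : g t₁ < 0 := hbar t₁ ht₁0 hft₁
  have hd : HasDerivAt f (g t₁) t₁ := (hf t₁ ht₁0).hasDerivAt (Ici_mem_nhds ht₁pos)
  have hslope : Filter.Tendsto (slope f t₁) (nhdsWithin t₁ {t₁}ᶜ) (nhds (g t₁)) :=
    hasDerivAt_iff_tendsto_slope.1 hd
  have hslope' : Filter.Tendsto (slope f t₁) (nhdsWithin t₁ (Set.Iio t₁)) (nhds (g t₁)) :=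
    hslope.mono_left (nhdsWithin_mono _ (fun t ht => ne_of_lt ht))
  have hnonneg : ∀ᶠ t in nhdsWithin t₁ (Set.Iio t₁), 0 ≤ slope f t₁ t := by
    have : Set.Ioo (0:ℝ) t₁ ∈ nhdsWithin t₁ (Set.Iio t₁) :=
      Ioo_mem_nhdsLT_of_mem ⟨ht₁pos, le_refl _⟩
    refine eventually_of_mem this (fun t ht => ?_)
    have hft : f t < B := hlt t (le_of_lt ht.1) ht.2
    rw [slope_def_field]
    apply div_nonneg_iff.2
    refine Or.inr ⟨?_, ?_⟩
    · rw [hft₁]; linarith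
    · linarith [ht.2]
  have : 0 ≤ g t₁ := ge_of_tendsto hslope' hnonneg
  linarith

/-- The oscillation bound: `|sin (B+y) - sin y| ≤ √(2-2cos B)`. -/
lemma osc_bound (B y : ℝ) : |Real.sin (B + y) - Real.sin y| ≤ Real.sqrt (2 - 2*Real.cos B) := by
  have hc : Real.cos B = Real.cos (B+y) * Real.cos y + Real.sin (B+y) * Real.sin y := by
    rw [show B = (B+y) - y by ring, Real.cos_sub]
    ring_nf
  have p1 := Real.sin_sq_add_cos_sq (B+y)
  have p2 := Real.sin_sq_add_cos_sq y
  have hid : (Real.sin (B+y) - Real.sin y)^2 + (Real.cos (B+y) - Real.cos y)^2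
      = 2 - 2*Real.cos B := by
    rw [hc]; ring_nf; linear_combination p1 + p2
  rw [← Real.sqrt_sq_eq_abs]
  apply Real.sqrt_le_sqrt
  nlinarith [sq_nonneg (Real.cos (B+y) - Real.cos y)]

set_option maxHeartbeats 1600000 in
/-- Existence of the barrier position `xs ∈ (0,π)`. -/
lemma xstar_exists (D κ : ℝ) (hD : 0 ≤ D)
    (hκ : Real.sqrt (138 + 22 * Real.sqrt 33) / 4 * D < κ) :
    ∃ xs : ℝ, 0 < xs ∧ xs < π ∧
      3*D < κ * (2*Real.sin xs - Real.sqrt (2 - 2*Real.cos xs)) := by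
  set w := Real.sqrt 33 with hw
  have hw2 : w^2 = 33 := Real.sq_sqrt (by norm_num)
  have hw0 : 0 ≤ w := Real.sqrt_nonneg _
  have hw5 : 5 < w := by nlinarith
  have hw6 : w < 6 := by nlinarith
  have hc01 : (1+w)/8 ≤ 1 := by linarith
  have hc00 : 0 < (1+w)/8 := by linarith
  set u := Real.arccos ((1+w)/8) with hu
  have hu0 : 0 < u := Real.arccos_pos.2 (by linarith)
  have hu2 : u < π/2 := Real.arccos_lt_pi_div_two.2 hc00
  have hcosu : Real.cos u = (1+w)/8 := Real.cos_arccos (by linarith) hc01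
  have hsinu : Real.sin u = Real.sqrt (1 - ((1+w)/8)^2) := Real.sin_arccos _
  set s₀ := Real.sqrt (1 - ((1+w)/8)^2) with hs₀
  have h1c : (0:ℝ) < 1 - ((1+w)/8)^2 := by nlinarith
  have hs2 : s₀^2 = 1 - ((1+w)/8)^2 := Real.sq_sqrt h1c.le
  have hs₀pos : 0 < s₀ := Real.sqrt_pos.2 h1c
  refine ⟨2*u, by linarith, by linarith, ?_⟩
  have hsinxs : Real.sin (2*u) = 2*s₀*((1+w)/8) := by
    rw [Real.sin_two_mul, hsinu, hcosu]
  have hcosxs : Real.cos (2*u) = 2*((1+w)/8)^2 - 1 := by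
    rw [Real.cos_two_mul, hcosu]
  have hsq : 2 - 2*Real.cos (2*u) = (2*s₀)^2 := by
    rw [hcosxs]; nlinarith [hs2]
  have hsqrt : Real.sqrt (2 - 2*Real.cos (2*u)) = 2*s₀ := by
    rw [hsq, Real.sqrt_sq (by linarith)]
  rw [hsinxs, hsqrt]
  -- now pure algebra: `κ * (4 s₀ (1+w)/8 - 2 s₀) > 3 D`
  set h := 2*s₀*(2*((1+w)/8) - 1) with hh
  have hhpos : 0 < h := by
    have : 0 < 2*((1+w)/8) - 1 := by linarith
    positivity
  have hE0 : (0:ℝ) ≤ 138 + 22*w := by linarith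
  have hEsq : (Real.sqrt (138+22*w))^2 = 138 + 22*w := Real.sq_sqrt hE0
  have hEpos : 0 < Real.sqrt (138+22*w) := Real.sqrt_pos.2 (by linarith)
  have hhE : (h * Real.sqrt (138+22*w))^2 = 144 := by
    rw [mul_pow, hEsq, hh]
    linear_combination ((w-3)^2*(138+22*w)/4) * hs2 + ((-11*w^3 - 25*w^2 + 639*w - 627)/128) * hw2
  have hhE12 : h * Real.sqrt (138+22*w) = 12 := by
    have hfac : (h * Real.sqrt (138+22*w) - 12) * (h * Real.sqrt (138+22*w) + 12) = 0 := by
      linear_combination hhE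
    rcases mul_eq_zero.1 hfac with h' | h'
    · linarith
    · nlinarith [mul_pos hhpos hEpos]
  have hmul : h * (Real.sqrt (138+22*w)/4 * D) < h * κ :=
    mul_lt_mul_of_pos_left hκ hhpos
  have heq : h * (Real.sqrt (138+22*w)/4 * D) = 3*D := by
    have := congrArg (fun z => z * (D/4)) hhE12
    linarith [this]
  calc 3*D = h * (Real.sqrt (138+22*w)/4 * D) := heq.symm
    _ < h * κ := hmul
    _ = κ * (2*(2*s₀*((1+w)/8)) - 2*s₀) := by rw [hh]; ring

/-- Core: the sign condition at a barrier position. -/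
lemma barrier_sign (κ D A : ℝ) (hκpos : 0 < κ) (hA : |A| ≤ D)
    (xs : ℝ) (hbar3 : 3*D < κ*(2*Real.sin xs - Real.sqrt (2 - 2*Real.cos xs)))
    (v y : ℝ) (hsin : Real.sin v = Real.sin xs) (hcos : Real.cos v = Real.cos xs) :
    A - κ/3*(2*Real.sin v + Real.sin (v + y) - Real.sin y) < 0 := by
  have hosc := osc_bound v y
  rw [hcos] at hosc
  have h1 : -(Real.sqrt (2 - 2*Real.cos xs)) ≤ Real.sin (v+y) - Real.sin y := (abs_le.1 hosc).1
  have h2 : 2*Real.sin xs - Real.sqrt (2-2*Real.cos xs) ≤ 2*Real.sin v + Real.sin (v+y) - Real.sin y := by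
    rw [hsin]; linarith
  have h3 : κ/3 * (2*Real.sin xs - Real.sqrt (2-2*Real.cos xs)) ≤
      κ/3 * (2*Real.sin v + Real.sin (v+y) - Real.sin y) :=
    mul_le_mul_of_nonneg_left h2 (by positivity)
  have hA' : A ≤ D := (abs_le.1 hA).2
  nlinarith [h3, hbar3]

lemma barrier_sign_neg (κ D A : ℝ) (hκpos : 0 < κ) (hA : |A| ≤ D)
    (xs : ℝ) (hbar3 : 3*D < κ*(2*Real.sin xs - Real.sqrt (2 - 2*Real.cos xs)))
    (v y : ℝ) (hsin : Real.sin v = -Real.sin xs) (hcos : Real.cos v = Real.cos xs) :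
    0 < A - κ/3*(2*Real.sin v + Real.sin (v + y) - Real.sin y) := by
  have hosc := osc_bound v y
  rw [hcos] at hosc
  have h1 : Real.sin (v+y) - Real.sin y ≤ Real.sqrt (2 - 2*Real.cos xs) := (abs_le.1 hosc).2
  have h2 : 2*Real.sin v + Real.sin (v+y) - Real.sin y ≤
      -(2*Real.sin xs - Real.sqrt (2-2*Real.cos xs)) := by
    rw [hsin]; linarith
  have h3 : κ/3 * (2*Real.sin v + Real.sin (v+y) - Real.sin y) ≤
      κ/3 * (-(2*Real.sin xs - Real.sqrt (2-2*Real.cos xs))) :=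
    mul_le_mul_of_nonneg_left h2 (by positivity)
  have hA' : -D ≤ A := (abs_le.1 hA).1
  nlinarith [h3, hbar3]

/-- Trapping: the difference variable stays bounded. -/
lemma trapped' (κ D A : ℝ) (hκpos : 0 < κ) (hA : |A| ≤ D)
    (xs : ℝ) (hbar3 : 3*D < κ*(2*Real.sin xs - Real.sqrt (2 - 2*Real.cos xs)))
    (x y : ℝ → ℝ)
    (hx : ∀ t ∈ Set.Ici (0:ℝ), HasDerivWithinAt x
      (A - κ/3*(2*Real.sin (x t) + Real.sin (x t + y t) - Real.sin (y t)))
      (Set.Ici 0) t) :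
    ∃ R : ℝ, ∀ t ∈ Set.Ici (0:ℝ), |x t| ≤ R := by
  set K : ℤ := ⌈(x 0 - xs)/(2*π)⌉ + 1 with hK
  set B : ℝ := xs + K*(2*π) with hB
  have hπ : (0:ℝ) < 2*π := by positivity
  have hx0B : x 0 < B := by
    have h1 : (x 0 - xs)/(2*π) ≤ ((K - 1 : ℤ) : ℝ) := by
      push_cast [hK]; linarith [Int.le_ceil ((x 0 - xs)/(2*π))]
    have h2 : x 0 - xs ≤ ((K:ℝ) - 1)*(2*π) := by
      rw [div_le_iff₀ hπ] at h1; push_cast at h1; linarith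
    nlinarith [h2, hπ]
  have hup : ∀ t ∈ Set.Ici (0:ℝ), x t < B := by
    apply barrier x _ hx hx0B
    intro t ht hxt
    apply barrier_sign κ D A hκpos hA xs hbar3 (x t) (y t)
    · rw [hxt, hB, Real.sin_add_int_mul_two_pi]
    · rw [hxt, hB, Real.cos_add_int_mul_two_pi]
  set K' : ℤ := ⌈(-(x 0) - xs)/(2*π)⌉ + 1 with hK'
  set B' : ℝ := xs + K'*(2*π) with hB'
  have hx0B' : -(x 0) < B' := by
    have h1 : (-(x 0) - xs)/(2*π) ≤ ((K' - 1 : ℤ) : ℝ) := by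
      push_cast [hK']; linarith [Int.le_ceil ((-(x 0) - xs)/(2*π))]
    have h2 : -(x 0) - xs ≤ ((K':ℝ) - 1)*(2*π) := by
      rw [div_le_iff₀ hπ] at h1; push_cast at h1; linarith
    nlinarith [h2, hπ]
  have hdn : ∀ t ∈ Set.Ici (0:ℝ), -(x t) < B' := by
    apply barrier (fun t => -(x t))
      (fun t => -(A - κ/3*(2*Real.sin (x t) + Real.sin (x t + y t) - Real.sin (y t))))
      (fun t ht => (hx t ht).neg) hx0B'
    intro t ht hxt
    have hxt' : x t = -xs + (-K' : ℤ)*(2*π) := by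
      have : x t = -B' := by linarith [neg_eq_iff_eq_neg.1 hxt]
      rw [this, hB']; push_cast; ring
    rw [neg_lt_zero]
    apply barrier_sign_neg κ D A hκpos hA xs hbar3 (x t) (y t)
    · rw [hxt', Real.sin_add_int_mul_two_pi, Real.sin_neg]
    · rw [hxt', Real.cos_add_int_mul_two_pi, Real.cos_neg]
  refine ⟨max B B', fun t ht => abs_le.2 ⟨?_, ?_⟩⟩
  · have h := hdn t ht
    have : -(max B B') ≤ -B' := neg_le_neg (le_max_right _ _)
    linarith
  · exact le_trans (le_of_lt (hup t ht)) (le_max_left _ _)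

/-- Elimination identity: at an equilibrium, `sin x` is a root of an explicit sextic. -/
lemma elim_poly (s₁ s₂ c₁ c₂ sS m n : ℝ)
    (h1 : c₁^2 = 1 - s₁^2) (h2 : c₂^2 = 1 - s₂^2)
    (h3 : sS = s₁*c₂ + c₁*s₂) (hm : s₂ = s₁ - m) (hn : sS = n - s₁) :
    4*s₁^6 - 8*(m+n)*s₁^5 + (4*m^2+16*m*n+4*n^2-3)*s₁^4
      + (4*m+4*n-8*m^2*n-8*m*n^2)*s₁^3
      + (2*m^2+2*n^2+4*m^2*n^2-8*m*n)*s₁^2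
      + (4*m^2*n+4*m*n^2-4*m^3-4*n^3)*s₁
      + (m^4-2*m^2*n^2+n^4) = 0 := by
  subst hm
  have hab : s₁*c₂ + c₁*(s₁ - m) = n - s₁ := h3.symm.trans hn
  have ha2 : (s₁*c₂)^2 = s₁^2*(1-(s₁-m)^2) := by rw [mul_pow, h2]
  have hb2 : (c₁*(s₁-m))^2 = (1-s₁^2)*(s₁-m)^2 := by rw [mul_pow, h1]
  calc 4*s₁^6 - 8*(m+n)*s₁^5 + (4*m^2+16*m*n+4*n^2-3)*s₁^4
      + (4*m+4*n-8*m^2*n-8*m*n^2)*s₁^3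
      + (2*m^2+2*n^2+4*m^2*n^2-8*m*n)*s₁^2
      + (4*m^2*n+4*m*n^2-4*m^3-4*n^3)*s₁
      + (m^4-2*m^2*n^2+n^4)
      = ((n - s₁)^2 - s₁^2*(1-(s₁-m)^2) - (1-s₁^2)*(s₁-m)^2)^2
        - 4*(s₁^2*(1-(s₁-m)^2))*((1-s₁^2)*(s₁-m)^2) := by ring
    _ = ((s₁*c₂ + c₁*(s₁-m))^2 - (s₁*c₂)^2 - (c₁*(s₁-m))^2)^2
        - 4*((s₁*c₂)^2)*((c₁*(s₁-m))^2) := by rw [← hab, ← ha2, ← hb2]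
    _ = 0 := by ring

/-- A level set of `sin` in a compact interval is finite. -/
lemma finite_sin_level (c lo hi : ℝ) :
    {ξ : ℝ | ξ ∈ Set.Icc lo hi ∧ Real.sin ξ = c}.Finite := by
  set S := {ξ : ℝ | ξ ∈ Set.Icc lo hi ∧ Real.sin ξ = c} with hS
  have hπ : (0:ℝ) < π := Real.pi_pos
  set F : ℝ → ℤ := fun ξ => ⌊ξ/π + 1/2⌋ with hF
  have hrange : ∀ ξ : ℝ, (F ξ : ℝ)*π - π/2 ≤ ξ ∧ ξ < (F ξ : ℝ)*π + π/2 := by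
    intro ξ
    have h1 : ((F ξ : ℝ)) ≤ ξ/π + 1/2 := Int.floor_le _
    have h2 : ξ/π + 1/2 < (F ξ : ℝ) + 1 := Int.lt_floor_add_one _
    constructor
    · have := mul_le_mul_of_nonneg_right h1 hπ.le
      rw [add_mul, div_mul_cancel₀ _ hπ.ne'] at this
      linarith
    · have := mul_lt_mul_of_pos_right h2 hπ
      rw [add_mul, div_mul_cancel₀ _ hπ.ne'] at this
      linarith
  have hinj : Set.InjOn F S := by
    intro ξ₁ h₁ ξ₂ h₂ hFeq
    set k := F ξ₁ with hk
    have hr₁ := hrange ξ₁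
    have hr₂ := hrange ξ₂
    rw [← hFeq] at hr₂
    have hu₁ : ξ₁ - k*π ∈ Set.Icc (-(π/2)) (π/2) := ⟨by linarith [hr₁.1], by linarith [hr₁.2]⟩
    have hu₂ : ξ₂ - k*π ∈ Set.Icc (-(π/2)) (π/2) := ⟨by linarith [hr₂.1], by linarith [hr₂.2]⟩
    have hsin : ∀ ξ : ℝ, Real.sin ξ = Real.sin (ξ - k*π) * Real.cos (k*π) := by
      intro ξ
      have : Real.sin ξ = Real.sin ((ξ - k*π) + k*π) := by ring_nf
      rw [this, Real.sin_add, Real.sin_int_mul_pi]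
      ring
    have hcosne : Real.cos ((k:ℝ)*π) ≠ 0 := by
      intro h0
      have h1 := Real.sin_sq_add_cos_sq ((k:ℝ)*π)
      rw [h0, Real.sin_int_mul_pi] at h1
      norm_num at h1
    have heq : Real.sin (ξ₁ - k*π) = Real.sin (ξ₂ - k*π) := by
      have e1 : Real.sin (ξ₁ - k*π) * Real.cos (k*π) = Real.sin (ξ₂ - k*π) * Real.cos (k*π) := by
        rw [← hsin ξ₁, ← hsin ξ₂, h₁.2, h₂.2]
      exact mul_right_cancel₀ hcosne e1
    have := Real.injOn_sin hu₁ hu₂ heq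
    linarith [this]
  apply Set.Finite.of_finite_image _ hinj
  apply Set.Finite.subset (Set.finite_Icc (⌊lo/π + 1/2⌋) (⌊hi/π + 1/2⌋))
  rintro k ⟨ξ, hξ, rfl⟩
  simp only [Set.mem_Icc]
  have h1 := hξ.1.1
  have h2 := hξ.1.2
  have hπ2 : (0:ℝ) < π := Real.pi_pos
  constructor
  · apply Int.floor_le_floor
    have : lo/π ≤ ξ/π := by gcongr
    linarith
  · apply Int.floor_le_floor
    have : ξ/π ≤ hi/π := by gcongr
    linarith

open Polynomial in
/-- The explicit sextic polynomial. -/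
noncomputable def sext (m n : ℝ) : Polynomial ℝ :=
  C 4 * X^6 + C (-8*(m+n)) * X^5 + C (4*m^2+16*m*n+4*n^2-3) * X^4
    + C (4*m+4*n-8*m^2*n-8*m*n^2) * X^3
    + C (2*m^2+2*n^2+4*m^2*n^2-8*m*n) * X^2
    + C (4*m^2*n+4*m*n^2-4*m^3-4*n^3) * X
    + C (m^4-2*m^2*n^2+n^4)

open Polynomial in
lemma sext_ne_zero (m n : ℝ) : sext m n ≠ 0 := by
  intro h
  have hc : (sext m n).coeff 6 = 4 := by
    unfold sext
    simp only [coeff_add, coeff_C_mul, coeff_X_pow, coeff_C, coeff_X]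
    norm_num
  rw [h] at hc
  simp at hc

open Polynomial in
lemma sext_eval (m n s : ℝ) : (sext m n).eval s =
    4*s^6 - 8*(m+n)*s^5 + (4*m^2+16*m*n+4*n^2-3)*s^4
      + (4*m+4*n-8*m^2*n-8*m*n^2)*s^3
      + (2*m^2+2*n^2+4*m^2*n^2-8*m*n)*s^2
      + (4*m^2*n+4*m*n^2-4*m^3-4*n^3)*s
      + (m^4-2*m^2*n^2+n^4) := by
  simp [sext]
  ring

/-- Points in an interval whose sine is a root of a fixed nonzero polynomial form a finite set. -/
lemma finite_sin_root (m n lo hi : ℝ) :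
    {ξ : ℝ | ξ ∈ Set.Icc lo hi ∧ (sext m n).IsRoot (Real.sin ξ)}.Finite := by
  have hroots : {s : ℝ | (sext m n).IsRoot s}.Finite :=
    (sext m n).finite_setOf_isRoot (sext_ne_zero m n)
  apply Set.Finite.subset (hroots.biUnion (fun r _ => finite_sin_level r lo hi))
  intro ξ hξ
  exact Set.mem_biUnion hξ.2 ⟨hξ.1, rfl⟩

/-- The set of equilibria in a box is finite. -/
lemma equil_finite (κ a b lox hix loy hiy : ℝ) (hκ : κ ≠ 0) :
    {p : ℝ × ℝ | p.1 ∈ Set.Icc lox hix ∧ p.2 ∈ Set.Icc loy hiy ∧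
      κ*(2*Real.sin p.1 + Real.sin (p.1+p.2) - Real.sin p.2) = 3*a ∧
      κ*(2*Real.sin p.2 + Real.sin (p.1+p.2) - Real.sin p.1) = 3*b}.Finite := by
  apply Set.Finite.subset
    (Set.Finite.prod (finite_sin_root ((a-b)/κ) ((2*a+b)/κ) lox hix)
      (finite_sin_root ((b-a)/κ) ((2*b+a)/κ) loy hiy))
  rintro ⟨X, Y⟩ ⟨hX, hY, hE1, hE2⟩
  have p1 : (Real.cos X)^2 = 1 - (Real.sin X)^2 := by
    linarith [Real.sin_sq_add_cos_sq X]
  have p2 : (Real.cos Y)^2 = 1 - (Real.sin Y)^2 := by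
    linarith [Real.sin_sq_add_cos_sq Y]
  constructor
  · refine ⟨hX, ?_⟩
    have hm : Real.sin Y = Real.sin X - (a-b)/κ := by
      field_simp
      linear_combination (1/3 : ℝ) * hE2 - (1/3 : ℝ) * hE1
    have hn : Real.sin (X+Y) = (2*a+b)/κ - Real.sin X := by
      field_simp
      linear_combination (2/3 : ℝ) * hE1 + (1/3 : ℝ) * hE2
    have := elim_poly (Real.sin X) (Real.sin Y) (Real.cos X) (Real.cos Y)
      (Real.sin (X+Y)) ((a-b)/κ) ((2*a+b)/κ) p1 p2 (Real.sin_add X Y) hm hn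
    show (sext _ _).eval _ = 0
    rw [sext_eval]
    linarith [this]
  · refine ⟨hY, ?_⟩
    have hm : Real.sin X = Real.sin Y - (b-a)/κ := by
      field_simp
      linear_combination (1/3 : ℝ) * hE1 - (1/3 : ℝ) * hE2
    have hn : Real.sin (X+Y) = (2*b+a)/κ - Real.sin Y := by
      field_simp
      linear_combination (2/3 : ℝ) * hE2 + (1/3 : ℝ) * hE1
    have hadd : Real.sin (X+Y) = Real.sin Y * Real.cos X + Real.cos Y * Real.sin X := by
      rw [Real.sin_add]; ring
    have := elim_poly (Real.sin Y) (Real.sin X) (Real.cos Y) (Real.cos X)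
      (Real.sin (X+Y)) ((b-a)/κ) ((2*b+a)/κ) p2 p1 hadd hm hn
    show (sext _ _).eval _ = 0
    rw [sext_eval]
    linarith [this]

/-- LaSalle step A: the trajectory approaches the zero set of `Q`. -/
lemma stepA (z : ℝ → ℝ × ℝ) (E box : Set (ℝ × ℝ)) (Q : ℝ × ℝ → ℝ) (𝒲 : ℝ → ℝ) (M CW : ℝ)
    (hbox : IsCompact box) (hz : ∀ t ∈ Set.Ici (0:ℝ), z t ∈ box)
    (hE : ∀ p ∈ box, Q p = 0 → p ∈ E)
    (hQ0 : ∀ p, 0 ≤ Q p) (hQcont : Continuous Q)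
    (hM : 0 < M) (hlip : ∀ s ∈ Set.Ici (0:ℝ), ∀ t ∈ Set.Ici (0:ℝ), dist (z s) (z t) ≤ M * |s - t|)
    (hWd : ∀ t ∈ Set.Ici (0:ℝ), HasDerivWithinAt 𝒲 (-(Q (z t))) (Set.Ici 0) t)
    (hLB : ∀ t ∈ Set.Ici (0:ℝ), -CW ≤ 𝒲 t) :
    ∀ ε > 0, ∃ T ≥ (0:ℝ), ∀ t ≥ T, ∃ p ∈ E, dist (z t) p < ε := by
  intro ε hε
  by_contra hcon
  push_neg at hcon
  have hfreq : ∀ T : ℝ, ∃ t, (max T 0 ≤ t) ∧ ∀ p ∈ E, ε ≤ dist (z t) p := by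
    intro T
    obtain ⟨t, ht, hP⟩ := hcon (max T 0) (le_max_right _ _)
    exact ⟨t, ht, hP⟩
  choose f hf1 hf2 using hfreq
  set G : Set (ℝ × ℝ) := box ∩ ⋂ q ∈ E, {p | ε/2 ≤ dist p q} with hG
  have hGclosed : IsClosed G := by
    apply IsClosed.inter hbox.isClosed
    apply isClosed_biInter
    intro q hq
    exact isClosed_le continuous_const (continuous_id.dist continuous_const)
  have hGcomp : IsCompact G := hbox.of_isClosed_subset hGclosed Set.inter_subset_left
  have hmemG : ∀ t ∈ Set.Ici (0:ℝ), (∀ p ∈ E, ε/2 ≤ dist (z t) p) → z t ∈ G := by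
    intro t ht h
    exact ⟨hz t ht, Set.mem_biInter (fun q hq => h q hq)⟩
  have hf01 : (0:ℝ) ≤ f 0 := le_trans (le_max_right _ _) (hf1 0)
  have hf0mem : z (f 0) ∈ G := by
    apply hmemG _ hf01
    intro p hp; linarith [hf2 0 p hp]
  have hQG : ∀ p ∈ G, 0 < Q p := by
    intro p hp
    rcases lt_or_eq_of_le (hQ0 p) with h | h
    · exact h
    · exfalso
      have hpE : p ∈ E := hE p hp.1 h.symm
      have hd : ε/2 ≤ dist p p := Set.mem_iInter₂.1 hp.2 p hpE
      rw [dist_self] at hd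
      linarith
  obtain ⟨pm, hpmG, hpmmin⟩ := hGcomp.exists_isMinOn ⟨z (f 0), hf0mem⟩ hQcont.continuousOn
  set c := Q pm with hcdef
  have hc : 0 < c := hQG pm hpmG
  have hmin : ∀ p ∈ G, c ≤ Q p := fun p hp => hpmmin hp
  set L := ε/(2*M) with hLdef
  have hL : 0 < L := by positivity
  have hML : M * L = ε/2 := by
    rw [hLdef]; field_simp
  have hstay : ∀ t₁, 0 ≤ t₁ → (∀ p ∈ E, ε ≤ dist (z t₁) p) →
      ∀ τ ∈ Set.Icc t₁ (t₁ + L), c ≤ Q (z τ) := by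
    intro t₁ ht₁ hbad τ hτ
    have hτ0 : (0:ℝ) ≤ τ := le_trans ht₁ hτ.1
    apply hmin
    apply hmemG τ hτ0
    intro p hp
    have htri : dist (z t₁) p ≤ dist (z t₁) (z τ) + dist (z τ) p := dist_triangle _ _ _
    have hlt : dist (z t₁) (z τ) ≤ M * |t₁ - τ| := hlip t₁ ht₁ τ hτ0
    have habs : |t₁ - τ| ≤ L := by
      rw [abs_sub_comm, abs_of_nonneg (by linarith [hτ.1])]
      linarith [hτ.2]
    have : M * |t₁ - τ| ≤ ε/2 := by
      rw [← hML]
      exact mul_le_mul_of_nonneg_left habs hM.le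
    linarith [hbad p hp]
  have hdrop : ∀ t₁, 0 ≤ t₁ → (∀ p ∈ E, ε ≤ dist (z t₁) p) →
      𝒲 (t₁ + L) ≤ 𝒲 t₁ - c * L := by
    intro t₁ ht₁ hbad
    have key := le_of_deriv_nonpos_Icc (fun t => 𝒲 t + c * t) (fun t => -(Q (z t)) + c)
      (fun t ht => by
        have h' := (hWd t ht).add ((hasDerivWithinAt_id t (Set.Ici 0)).const_mul c)
        rw [mul_one] at h'
        exact h')
      ht₁ (le_add_of_nonneg_right hL.le)
      (fun τ hτ => by
        have := hstay t₁ ht₁ hbad τ hτ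
        show -Q (z τ) + c ≤ 0
        linarith)
    nlinarith [key]
  have hanti : ∀ s t : ℝ, 0 ≤ s → s ≤ t → 𝒲 t ≤ 𝒲 s := by
    intro s t hs hst
    exact le_of_deriv_nonpos_Icc 𝒲 (fun t => -(Q (z t))) hWd hs hst
      (fun τ hτ => neg_nonpos.2 (hQ0 _))
  set u : ℕ → ℝ := fun n => Nat.rec (f 0) (fun _ s => f (s + L)) n with hu
  have hu0 : ∀ n, 0 ≤ u n := by
    intro n
    cases n with
    | zero => exact hf01
    | succ k => exact le_trans (le_max_right _ _) (hf1 _)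
  have hustep : ∀ n, u n + L ≤ u (n+1) := by
    intro n
    exact le_trans (le_max_left _ _) (hf1 (u n + L))
  have hbadn : ∀ n, ∀ p ∈ E, ε ≤ dist (z (u n)) p := by
    intro n
    cases n with
    | zero => exact hf2 0
    | succ k => exact hf2 _
  have hchain : ∀ n : ℕ, 𝒲 (u n + L) ≤ 𝒲 (u 0) - ((n:ℝ)+1) * (c * L) := by
    intro n
    induction n with
    | zero =>
      have := hdrop (u 0) (hu0 0) (hbadn 0)
      push_cast
      linarith
    | succ k ih =>
      have h1 := hdrop (u (k+1)) (hu0 (k+1)) (hbadn (k+1))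
      have h2 := hanti (u k + L) (u (k+1)) (by linarith [hu0 k, hL]) (hustep k)
      push_cast
      push_cast at ih
      linarith
  have hcL : 0 < c * L := by positivity
  obtain ⟨n, hn⟩ := exists_nat_gt ((𝒲 (u 0) + CW)/(c*L))
  rw [div_lt_iff₀ hcL] at hn
  have h1 := hchain n
  have h2 := hLB (u n + L) (by have := hu0 n; simp only [Set.mem_Ici]; linarith)
  nlinarith [hcL]

/-- LaSalle step C: approach to a finite set plus continuity gives convergence. -/
lemma stepC (z : ℝ → ℝ × ℝ) (E : Set (ℝ × ℝ)) (hEfin : E.Finite)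
    (hzc : ContinuousOn z (Set.Ici (0:ℝ)))
    (hA : ∀ ε > 0, ∃ T ≥ (0:ℝ), ∀ t ≥ T, ∃ p ∈ E, dist (z t) p < ε) :
    ∃ p, Filter.Tendsto z Filter.atTop (nhds p) := by
  by_cases hsub : ∀ p ∈ E, ∀ q ∈ E, p = q
  · -- E subsingleton
    obtain ⟨T1, hT1, h1⟩ := hA 1 one_pos
    obtain ⟨p, hpE, _⟩ := h1 T1 le_rfl
    refine ⟨p, Metric.tendsto_atTop.2 ?_⟩
    intro ε hε
    obtain ⟨T, hT, hT'⟩ := hA ε hε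
    refine ⟨T, fun t ht => ?_⟩
    obtain ⟨q, hqE, hq⟩ := hT' t ht
    rwa [hsub q hqE p hpE] at hq
  · push_neg at hsub
    obtain ⟨p₁, hp₁, q₁, hq₁, hpq₁⟩ := hsub
    set F := hEfin.toFinset with hF
    set pairs := (F ×ˢ F).filter (fun pq => pq.1 ≠ pq.2) with hpairs
    have hpairsne : pairs.Nonempty := by
      refine ⟨(p₁, q₁), Finset.mem_filter.2 ⟨Finset.mem_product.2 ⟨?_, ?_⟩, hpq₁⟩⟩
      · exact hEfin.mem_toFinset.2 hp₁
      · exact hEfin.mem_toFinset.2 hq₁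
    set δ := pairs.inf' hpairsne (fun pq => dist pq.1 pq.2) with hδdef
    have hδpos : 0 < δ := by
      rw [hδdef, Finset.lt_inf'_iff]
      intro pq hpq
      exact dist_pos.2 (Finset.mem_filter.1 hpq).2
    have hδle : ∀ p ∈ E, ∀ q ∈ E, p ≠ q → δ ≤ dist p q := by
      intro p hp q hq hne
      have hmem : (p, q) ∈ pairs := by
        rw [hpairs]
        refine Finset.mem_filter.2 ⟨Finset.mem_product.2 ⟨?_, ?_⟩, ?_⟩
        · exact hEfin.mem_toFinset.2 hp
        · exact hEfin.mem_toFinset.2 hq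
        · exact hne
      exact Finset.inf'_le (fun pq => dist pq.1 pq.2) hmem
    obtain ⟨T₀, hT₀0, hT₀⟩ := hA (δ/3) (by positivity)
    obtain ⟨p, hpE, hpd⟩ := hT₀ T₀ le_rfl
    have hclaim : ∀ t ≥ T₀, dist (z t) p < δ/3 := by
      intro t ht
      obtain ⟨q, hqE, hqd⟩ := hT₀ t ht
      by_cases hpq : q = p
      · rwa [hpq] at hqd
      · exfalso
        have hdpq : δ ≤ dist p q := hδle p hpE q hqE (fun h => hpq h.symm)
        have hφt : 2*δ/3 < dist (z t) p := by
          have := dist_triangle p (z t) q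
          rw [dist_comm p (z t)] at this
          linarith
        -- IVT for φ := dist (z ·) p on [T₀, t]
        have hTt : T₀ ≤ t := ht
        have hφcont : ContinuousOn (fun τ => dist (z τ) p) (Set.Icc T₀ t) :=
          (continuous_id.dist continuous_const).comp_continuousOn
            (hzc.mono (fun τ hτ => le_trans hT₀0 hτ.1))
        have hivt := intermediate_value_Icc hTt hφcont
        have hmem : δ/2 ∈ Set.Icc (dist (z T₀) p) (dist (z t) p) := by
          constructor <;> [linarith; linarith]
        obtain ⟨τ, hτmem, hτeq⟩ := hivt hmem
        simp only at hτeq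
        obtain ⟨r, hrE, hrd⟩ := hT₀ τ (hτmem.1)
        by_cases hrp : r = p
        · rw [hrp] at hrd; rw [hτeq] at hrd; linarith
        · have : δ ≤ dist p r := hδle p hpE r hrE (fun h => hrp h.symm)
          have htri := dist_triangle p (z τ) r
          rw [dist_comm p (z τ), hτeq] at htri
          linarith
    refine ⟨p, Metric.tendsto_atTop.2 ?_⟩
    intro ε hε
    obtain ⟨T₁, hT₁0, hT₁⟩ := hA (min ε (δ/3)) (lt_min hε (by positivity))
    refine ⟨max T₀ T₁, fun t ht => ?_⟩
    obtain ⟨q, hqE, hqd⟩ := hT₁ t (le_trans (le_max_right _ _) ht)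
    have h1 : dist (z t) p < δ/3 := hclaim t (le_trans (le_max_left _ _) ht)
    by_cases hpq : q = p
    · rw [hpq] at hqd
      exact lt_of_lt_of_le hqd (min_le_left _ _)
    · exfalso
      have : δ ≤ dist p q := hδle p hpE q hqE (fun h => hpq h.symm)
      have htri := dist_triangle p (z t) q
      rw [dist_comm p (z t)] at htri
      have : dist (z t) q < δ/3 := lt_of_lt_of_le hqd (min_le_right _ _)
      linarith

set_option maxHeartbeats 1000000 in
/-- Convergence of the planar phase-difference system. -/
lemma planar (κ n0 n1 n2 D : ℝ) (hκpos : 0 < κ)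
    (hD01 : |n0 - n1| ≤ D) (hD12 : |n1 - n2| ≤ D)
    (xs : ℝ) (hbar3 : 3*D < κ*(2*Real.sin xs - Real.sqrt (2 - 2*Real.cos xs)))
    (x y : ℝ → ℝ)
    (hx : ∀ t ∈ Set.Ici (0:ℝ), HasDerivWithinAt x
      ((n0-n1) - κ/3*(2*Real.sin (x t) + Real.sin (x t + y t) - Real.sin (y t))) (Set.Ici 0) t)
    (hy : ∀ t ∈ Set.Ici (0:ℝ), HasDerivWithinAt y
      ((n1-n2) - κ/3*(2*Real.sin (y t) + Real.sin (x t + y t) - Real.sin (x t))) (Set.Ici 0) t) :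
    ∃ px py, Filter.Tendsto x Filter.atTop (nhds px) ∧ Filter.Tendsto y Filter.atTop (nhds py) := by
  have hy' : ∀ t ∈ Set.Ici (0:ℝ), HasDerivWithinAt y
      ((n1-n2) - κ/3*(2*Real.sin (y t) + Real.sin (y t + x t) - Real.sin (x t))) (Set.Ici 0) t := by
    intro t ht
    have := hy t ht
    rwa [add_comm (x t) (y t)] at this
  obtain ⟨Rx, hRx⟩ := trapped' κ D (n0-n1) hκpos hD01 xs hbar3 x y hx
  obtain ⟨Ry, hRy⟩ := trapped' κ D (n1-n2) hκpos hD12 xs hbar3 y x hy'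
  set z : ℝ → ℝ × ℝ := fun t => (x t, y t) with hz
  set box : Set (ℝ × ℝ) := Set.Icc (-Rx) Rx ×ˢ Set.Icc (-Ry) Ry with hbox
  set E : Set (ℝ × ℝ) := {p : ℝ × ℝ | p.1 ∈ Set.Icc (-Rx) Rx ∧ p.2 ∈ Set.Icc (-Ry) Ry ∧
      κ*(2*Real.sin p.1 + Real.sin (p.1+p.2) - Real.sin p.2) = 3*(n0-n1) ∧
      κ*(2*Real.sin p.2 + Real.sin (p.1+p.2) - Real.sin p.1) = 3*(n1-n2)} with hE
  set Q : ℝ × ℝ → ℝ := fun p =>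
      ((n0-(n0+n1+n2)/3) - κ/3*(Real.sin p.1 + Real.sin (p.1+p.2)))^2
      + ((n1-(n0+n1+n2)/3) + κ/3*(Real.sin p.1 - Real.sin p.2))^2
      + ((n2-(n0+n1+n2)/3) + κ/3*(Real.sin (p.1+p.2) + Real.sin p.2))^2 with hQ
  set 𝒲 : ℝ → ℝ := fun t => ((n0+n1+n2)/3 - n0)*(x t) + (n2 - (n0+n1+n2)/3)*(y t)
      - κ/3*(Real.cos (x t) + Real.cos (y t) + Real.cos (x t + y t)) with hW
  have hzbox : ∀ t ∈ Set.Ici (0:ℝ), z t ∈ box := by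
    intro t ht
    exact Set.mk_mem_prod (abs_le.1 (hRx t ht)) (abs_le.1 (hRy t ht))
  have hboxcomp : IsCompact box := IsCompact.prod isCompact_Icc isCompact_Icc
  have hEQ : ∀ p ∈ box, Q p = 0 → p ∈ E := by
    rintro ⟨X, Y⟩ hp hQ0
    simp only [hQ, hE] at hQ0 ⊢
    set P0 := (n0-(n0+n1+n2)/3) - κ/3*(Real.sin X + Real.sin (X+Y)) with hP0
    set P1 := (n1-(n0+n1+n2)/3) + κ/3*(Real.sin X - Real.sin Y) with hP1
    set P2 := (n2-(n0+n1+n2)/3) + κ/3*(Real.sin (X+Y) + Real.sin Y) with hP2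
    have h0 : P0 = 0 := by nlinarith [sq_nonneg P0, sq_nonneg P1, sq_nonneg P2, sq_abs P0]
    have h1 : P1 = 0 := by nlinarith [sq_nonneg P0, sq_nonneg P1, sq_nonneg P2]
    have h2 : P2 = 0 := by nlinarith [sq_nonneg P0, sq_nonneg P1, sq_nonneg P2]
    refine ⟨(Set.mem_prod.1 hp).1, (Set.mem_prod.1 hp).2, ?_, ?_⟩
    · rw [hP0] at h0; rw [hP1] at h1
      linear_combination (-3)*h0 + 3*h1
    · rw [hP1] at h1; rw [hP2] at h2
      linear_combination (-3)*h1 + 3*h2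
  have hQnn : ∀ p, 0 ≤ Q p := by
    intro p
    rw [hQ]
    positivity
  have hQcont : Continuous Q := by
    rw [hQ]
    fun_prop
  -- Lipschitz bounds
  set M : ℝ := |n0-n1| + |n1-n2| + 2*κ + 1 with hM
  have hMpos : 0 < M := by positivity
  have hvxb : ∀ t ∈ Set.Ici (0:ℝ),
      ‖(n0-n1) - κ/3*(2*Real.sin (x t) + Real.sin (x t + y t) - Real.sin (y t))‖ ≤ M := by
    intro t ht
    rw [Real.norm_eq_abs, abs_le]
    have b1 := Real.neg_one_le_sin (x t); have b2 := Real.sin_le_one (x t)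
    have b3 := Real.neg_one_le_sin (y t); have b4 := Real.sin_le_one (y t)
    have b5 := Real.neg_one_le_sin (x t + y t); have b6 := Real.sin_le_one (x t + y t)
    have c1 := le_abs_self (n0-n1); have c2 := neg_abs_le (n0-n1)
    have c3 := abs_nonneg (n1-n2)
    constructor <;> nlinarith [hκpos.le]
  have hvyb : ∀ t ∈ Set.Ici (0:ℝ),
      ‖(n1-n2) - κ/3*(2*Real.sin (y t) + Real.sin (x t + y t) - Real.sin (x t))‖ ≤ M := by
    intro t ht
    rw [Real.norm_eq_abs, abs_le]
    have b1 := Real.neg_one_le_sin (x t); have b2 := Real.sin_le_one (x t)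
    have b3 := Real.neg_one_le_sin (y t); have b4 := Real.sin_le_one (y t)
    have b5 := Real.neg_one_le_sin (x t + y t); have b6 := Real.sin_le_one (x t + y t)
    have c1 := le_abs_self (n1-n2); have c2 := neg_abs_le (n1-n2)
    have c3 := abs_nonneg (n0-n1)
    constructor <;> nlinarith [hκpos.le]
  have hlipx : ∀ s ∈ Set.Ici (0:ℝ), ∀ t ∈ Set.Ici (0:ℝ), |x s - x t| ≤ M * |s - t| := by
    intro s hs t ht
    have := Convex.norm_image_sub_le_of_norm_hasDerivWithin_le
      (f' := fun t => (n0-n1) - κ/3*(2*Real.sin (x t) + Real.sin (x t + y t) - Real.sin (y t)))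
      hx hvxb (convex_Ici 0) ht hs
    simpa [Real.norm_eq_abs] using this
  have hlipy : ∀ s ∈ Set.Ici (0:ℝ), ∀ t ∈ Set.Ici (0:ℝ), |y s - y t| ≤ M * |s - t| := by
    intro s hs t ht
    have := Convex.norm_image_sub_le_of_norm_hasDerivWithin_le
      (f' := fun t => (n1-n2) - κ/3*(2*Real.sin (y t) + Real.sin (x t + y t) - Real.sin (x t)))
      hy hvyb (convex_Ici 0) ht hs
    simpa [Real.norm_eq_abs] using this
  have hlip : ∀ s ∈ Set.Ici (0:ℝ), ∀ t ∈ Set.Ici (0:ℝ), dist (z s) (z t) ≤ M * |s - t| := by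
    intro s hs t ht
    rw [hz]
    rw [Prod.dist_eq]
    simp only [Real.dist_eq]
    exact max_le (hlipx s hs t ht) (hlipy s hs t ht)
  -- the Lyapunov derivative
  have hWd : ∀ t ∈ Set.Ici (0:ℝ), HasDerivWithinAt 𝒲 (-(Q (z t))) (Set.Ici 0) t := by
    intro t ht
    have hdx := hx t ht
    have hdy := hy t ht
    have hcomb := (((hdx.const_mul ((n0+n1+n2)/3 - n0)).add
        (hdy.const_mul (n2 - (n0+n1+n2)/3))).sub
        (((hdx.cos.add hdy.cos).add ((hdx.add hdy).cos)).const_mul (κ/3)))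
    rw [hW]
    refine hcomb.congr_deriv ?_
    rw [hQ]
    simp only [Pi.add_apply]
    ring
  have hLB : ∀ t ∈ Set.Ici (0:ℝ),
      -(abs ((n0+n1+n2)/3 - n0) * Rx + abs (n2-(n0+n1+n2)/3) * Ry + κ) ≤ 𝒲 t := by
    intro t ht
    rw [hW]
    have hb1 : -(abs ((n0+n1+n2)/3 - n0) * Rx) ≤ ((n0+n1+n2)/3 - n0)*(x t) := by
      have h1 := neg_abs_le (((n0+n1+n2)/3 - n0)*(x t))
      have h2 : abs (((n0+n1+n2)/3 - n0)*(x t)) ≤ abs ((n0+n1+n2)/3 - n0) * Rx := by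
        rw [abs_mul]
        exact mul_le_mul_of_nonneg_left (hRx t ht) (abs_nonneg _)
      linarith
    have hb2 : -(abs (n2-(n0+n1+n2)/3) * Ry) ≤ (n2 - (n0+n1+n2)/3)*(y t) := by
      have h1 := neg_abs_le ((n2-(n0+n1+n2)/3)*(y t))
      have h2 : abs ((n2-(n0+n1+n2)/3)*(y t)) ≤ abs (n2-(n0+n1+n2)/3) * Ry := by
        rw [abs_mul]
        exact mul_le_mul_of_nonneg_left (hRy t ht) (abs_nonneg _)
      linarith
    have hb3 := Real.cos_le_one (x t); have hb4 := Real.cos_le_one (y t)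
    have hb5 := Real.cos_le_one (x t + y t)
    nlinarith [hκpos.le]
  have hEfin : E.Finite := equil_finite κ (n0-n1) (n1-n2) (-Rx) Rx (-Ry) Ry hκpos.ne'
  have hzc : ContinuousOn z (Set.Ici (0:ℝ)) := by
    rw [hz]
    exact ContinuousOn.prodMk (fun t ht => (hx t ht).continuousWithinAt)
      (fun t ht => (hy t ht).continuousWithinAt)
  have hA := stepA z E box Q 𝒲 M _ hboxcomp hzbox hEQ hQnn hQcont hMpos hlip hWd hLB
  obtain ⟨p, hp⟩ := stepC z E hEfin hzc hA
  exact ⟨p.1, p.2, (continuous_fst.tendsto p).comp hp, (continuous_snd.tendsto p).comp hp⟩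

/-- Proposition 4.1: for `N = 3` and `κ > (√(138+22√33)/4)·D(Ω)`, every Kuramoto
flow exhibits complete phase-locking. -/
theorem three_oscillators_complete_phase_locking (κ : ℝ) (ν : Fin 3 → ℝ)
    (hκ : Real.sqrt (138 + 22 * Real.sqrt 33) / 4 * freqDiam ν < κ)
    (Φ : (Fin 3 → ℝ) → ℝ → Fin 3 → ℝ)
    (hΦ0 : ∀ Θ0 : Fin 3 → ℝ, Φ Θ0 0 = Θ0)
    (hΦ : ∀ Θ0 : Fin 3 → ℝ, IsKuramotoOn κ ν (Φ Θ0)) :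
    ∀ Θ0 : Fin 3 → ℝ, ∀ i j : Fin 3, ∃ L : ℝ,
      Filter.Tendsto (fun t => Φ Θ0 t i - Φ Θ0 t j) Filter.atTop (nhds L) := by
  intro Θ0 i j
  have hDfin : {d : ℝ | ∃ i : Fin 3, ∃ j : Fin 3, d = |ν i - ν j|}.Finite := by
    have he : {d : ℝ | ∃ i : Fin 3, ∃ j : Fin 3, d = |ν i - ν j|} =
        Set.range (fun ij : Fin 3 × Fin 3 => |ν ij.1 - ν ij.2|) := by
      ext d
      constructor
      · rintro ⟨i, j, rfl⟩; exact ⟨(i, j), rfl⟩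
      · rintro ⟨⟨i, j⟩, rfl⟩; exact ⟨i, j, rfl⟩
    rw [he]; exact Set.finite_range _
  have hDle : ∀ i j : Fin 3, |ν i - ν j| ≤ freqDiam ν := by
    intro i j
    exact le_csSup hDfin.bddAbove ⟨i, j, rfl⟩
  have hD0 : 0 ≤ freqDiam ν := by
    have h := hDle 0 0
    rw [sub_self, abs_zero] at h
    exact h
  have hκpos : 0 < κ :=
    lt_of_le_of_lt (mul_nonneg (by positivity) hD0) hκ
  obtain ⟨xs, _, _, hbar3⟩ := xstar_exists (freqDiam ν) κ hD0 hκ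
  set x : ℝ → ℝ := fun t => Φ Θ0 t 0 - Φ Θ0 t 1 with hxd
  set y : ℝ → ℝ := fun t => Φ Θ0 t 1 - Φ Θ0 t 2 with hyd
  have hode := hΦ Θ0
  have hcast : ((3:ℕ):ℝ) = 3 := by norm_num
  have hx' : ∀ t ∈ Set.Ici (0:ℝ), HasDerivWithinAt x
      ((ν 0 - ν 1) - κ/3*(2*Real.sin (x t) + Real.sin (x t + y t) - Real.sin (y t)))
      (Set.Ici 0) t := by
    intro t ht
    have h0 := hode 0 t ht
    have h1 := hode 1 t ht
    have hsub := HasDerivWithinAt.sub h0 h1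
    refine hsub.congr_deriv ?_
    simp only [Fin.sum_univ_three, hxd, hyd]
    push_cast
    rw [show Φ Θ0 t 0 - Φ Θ0 t 1 + (Φ Θ0 t 1 - Φ Θ0 t 2) = Φ Θ0 t 0 - Φ Θ0 t 2 by ring,
      show Φ Θ0 t 1 - Φ Θ0 t 0 = -(Φ Θ0 t 0 - Φ Θ0 t 1) by ring,
      show Φ Θ0 t 2 - Φ Θ0 t 0 = -(Φ Θ0 t 0 - Φ Θ0 t 2) by ring,
      show Φ Θ0 t 2 - Φ Θ0 t 1 = -(Φ Θ0 t 1 - Φ Θ0 t 2) by ring,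
      sub_self, sub_self, Real.sin_neg, Real.sin_neg, Real.sin_neg, Real.sin_zero]
    ring
  have hy' : ∀ t ∈ Set.Ici (0:ℝ), HasDerivWithinAt y
      ((ν 1 - ν 2) - κ/3*(2*Real.sin (y t) + Real.sin (x t + y t) - Real.sin (x t)))
      (Set.Ici 0) t := by
    intro t ht
    have h1 := hode 1 t ht
    have h2 := hode 2 t ht
    have hsub := HasDerivWithinAt.sub h1 h2
    refine hsub.congr_deriv ?_
    simp only [Fin.sum_univ_three, hxd, hyd]
    push_cast
    rw [show Φ Θ0 t 0 - Φ Θ0 t 1 + (Φ Θ0 t 1 - Φ Θ0 t 2) = Φ Θ0 t 0 - Φ Θ0 t 2 by ring,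
      show Φ Θ0 t 2 - Φ Θ0 t 1 = -(Φ Θ0 t 1 - Φ Θ0 t 2) by ring,
      sub_self, sub_self, Real.sin_neg, Real.sin_zero]
    ring
  obtain ⟨px, py, hpx, hpy⟩ := planar κ (ν 0) (ν 1) (ν 2) (freqDiam ν) hκpos
    (hDle 0 1) (hDle 1 2) xs hbar3 x y hx' hy'
  fin_cases i <;> fin_cases j
  · exact ⟨0, by simp only [sub_self]; exact tendsto_const_nhds⟩
  · exact ⟨px, hpx⟩
  · refine ⟨px + py, ?_⟩
    have he : (fun t => Φ Θ0 t 0 - Φ Θ0 t 2) = fun t => x t + y t := by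
      funext t; simp only [hxd, hyd]; ring
    have h2 : Filter.Tendsto (fun t => x t + y t) Filter.atTop (nhds (px + py)) := hpx.add hpy
    exact he ▸ h2
  · refine ⟨-px, ?_⟩
    have he : (fun t => Φ Θ0 t 1 - Φ Θ0 t 0) = fun t => -(x t) := by
      funext t; simp only [hxd]; ring
    have h2 : Filter.Tendsto (fun t => -(x t)) Filter.atTop (nhds (-px)) := hpx.neg
    exact he ▸ h2
  · exact ⟨0, by simp only [sub_self]; exact tendsto_const_nhds⟩
  · exact ⟨py, hpy⟩
  · refine ⟨-(px + py), ?_⟩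
    have he : (fun t => Φ Θ0 t 2 - Φ Θ0 t 0) = fun t => -(x t + y t) := by
      funext t; simp only [hxd, hyd]; ring
    have h2 : Filter.Tendsto (fun t => -(x t + y t)) Filter.atTop (nhds (-(px + py))) :=
      (hpx.add hpy).neg
    exact he ▸ h2
  · refine ⟨-py, ?_⟩
    have he : (fun t => Φ Θ0 t 2 - Φ Θ0 t 1) = fun t => -(y t) := by
      funext t; simp only [hyd]; ring
    have h2 : Filter.Tendsto (fun t => -(y t)) Filter.atTop (nhds (-py)) := hpy.neg
    exact he ▸ h2
  · exact ⟨0, by simp only [sub_self]; exact tendsto_const_nhds⟩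
end

section
/- Let κ > 0 and let θ be a Kuramoto solution. Suppose at a time t₀: R(t₀) ≥ R₀ > 0 and Δ(t₀) ≤ (1/4)·(D(Ω)/(κ·R₀))², and suppose the parameters γ ∈ (1/2, 1] and β ∈ (0, π/2) satisfy either R₀ ≥ γ + (1−γ)·cos β, or 2γ + (D(Ω)²/(4κ²R₀²))·(1/(1−cos β)) ≤ 1 + R₀. Then Θ(t₀) has a γ-ensemble of arclength ≤ 2β: the set A := { i ∈ {1,…,N} : there exists m ∈ ℤ with |θ_i(t₀) − φ(t₀) − 2π·m| ≤ β } satisfies |A| ≥ γ·N, where φ(t₀) is any argument of ∑_j exp(𝕚θ_j(t₀)). -/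
lemma cos_le_cos_of_not_near (x β : ℝ) (hβ0 : 0 < β) (hβπ : β < Real.pi)
    (h : ¬ ∃ m : ℤ, |x - 2 * Real.pi * (m : ℝ)| ≤ β) : Real.cos x ≤ Real.cos β := by
  by_contra hlt
  push_neg at hlt
  apply h
  refine ⟨round (x / (2 * Real.pi)), ?_⟩
  set m : ℤ := round (x / (2 * Real.pi)) with hm
  have h2π : (0:ℝ) < 2 * Real.pi := by positivity
  have habs : |x - 2 * Real.pi * (m:ℝ)| ≤ Real.pi := by
    have h1 : |x / (2 * Real.pi) - (m:ℝ)| ≤ 1 / 2 := abs_sub_round (x / (2 * Real.pi))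
    have heq : (x / (2 * Real.pi) - (m:ℝ)) * (2 * Real.pi) = x - 2 * Real.pi * (m:ℝ) := by
      field_simp
    have h2 : |x - 2 * Real.pi * (m:ℝ)| = |x / (2 * Real.pi) - (m:ℝ)| * (2 * Real.pi) := by
      rw [← heq, abs_mul, abs_of_pos h2π]
    rw [h2]
    nlinarith [Real.pi_pos]
  have hcos : Real.cos (x - 2 * Real.pi * (m:ℝ)) = Real.cos x := by
    have := Real.cos_sub_int_mul_two_pi x m
    rw [← this]; ring_nf
  by_contra hgt
  push_neg at hgt
  have hmem1 : β ∈ Set.Icc 0 Real.pi := ⟨hβ0.le, hβπ.le⟩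
  have hmem2 : |x - 2 * Real.pi * (m:ℝ)| ∈ Set.Icc 0 Real.pi := ⟨abs_nonneg _, habs⟩
  have := Real.strictAntiOn_cos hmem1 hmem2 hgt
  rw [Real.cos_abs, hcos] at this
  linarith



/-- Order parameter `R(x) = |(1/N) ∑ⱼ exp(i xⱼ)|`. -/
noncomputable def orderParam {N : ℕ} (x : Fin N → ℝ) : ℝ :=
  ‖(N : ℂ)⁻¹ * ∑ j, Complex.exp (Complex.I * (x j : ℂ))‖

set_option maxHeartbeats 1000000 in
/-- Lemma 5.2 (emergence of majority ensembles): if at time `t₀` we have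
`R(t₀) ≥ R₀ > 0` and `Δ(t₀) ≤ (1/4)(D(Ω)/(κR₀))²`, and `γ ∈ (1/2,1]`,
`β ∈ (0,π/2)` satisfy either `R₀ ≥ γ + (1−γ) cos β` or
`2γ + (D(Ω)²/(4κ²R₀²))·(1/(1−cos β)) ≤ 1 + R₀`, then the set of oscillators
within arc-distance `β` (mod 2π) of the mean phase `φ₀` has at least `γN` members. -/
theorem majority_ensemble_emerges (N : ℕ) (hN : 1 ≤ N) (κ : ℝ) (hκ : 0 < κ)
    (ν : Fin N → ℝ) (θ : ℝ → Fin N → ℝ) (hθ : IsKuramotoOn κ ν θ)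
    (t₀ R₀ φ₀ : ℝ) (hR₀pos : 0 < R₀)
    (hR : R₀ ≤ orderParam (θ t₀))
    (hφ₀ : (∑ j, Complex.exp (Complex.I * (θ t₀ j : ℂ)))
        = ((‖∑ j, Complex.exp (Complex.I * (θ t₀ j : ℂ))‖ : ℝ) : ℂ) *
            Complex.exp (Complex.I * (φ₀ : ℂ)))
    (hΔ : (N : ℝ)⁻¹ * ∑ k, Real.sin (θ t₀ k - φ₀) ^ 2 ≤
      1 / 4 * (freqDiam ν / (κ * R₀)) ^ 2)
    (γ β : ℝ) (hγ₁ : 1 / 2 < γ) (hγ₂ : γ ≤ 1)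
    (hβ : β ∈ Set.Ioo 0 (Real.pi / 2))
    (hcond : R₀ ≥ γ + (1 - γ) * Real.cos β ∨
      2 * γ + freqDiam ν ^ 2 / (4 * κ ^ 2 * R₀ ^ 2) * (1 / (1 - Real.cos β)) ≤ 1 + R₀) :
    γ * N ≤
      (({i : Fin N | ∃ m : ℤ, |θ t₀ i - φ₀ - 2 * Real.pi * (m : ℝ)| ≤ β}.ncard : ℝ)) := by
  classical
  obtain ⟨hβ0, hβπ2⟩ := hβ
  have hπ := Real.pi_pos
  have hβπ : β < Real.pi := by linarith
  have hNpos : (0:ℝ) < N := by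
    have : (1:ℝ) ≤ N := by exact_mod_cast hN
    linarith
  set c : Fin N → ℝ := fun i => Real.cos (θ t₀ i - φ₀) with hc
  set s2 : Fin N → ℝ := fun i => Real.sin (θ t₀ i - φ₀) ^ 2 with hs2
  have hpyth : ∀ i, s2 i = 1 - c i ^ 2 := by
    intro i
    have := Real.sin_sq_add_cos_sq (θ t₀ i - φ₀)
    simp only [hs2, hc]
    linarith
  set R : ℝ := orderParam (θ t₀) with hRdef
  -- sum of cosines equals N * R
  have hsumc : ∑ i, c i = (N:ℝ) * R := by
    have h1 : (∑ j, Complex.exp (Complex.I * (θ t₀ j : ℂ)))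
        * Complex.exp (-(Complex.I * (φ₀:ℂ)))
        = ((‖∑ j, Complex.exp (Complex.I * (θ t₀ j : ℂ))‖ : ℝ) : ℂ) := by
      conv_lhs => rw [hφ₀]
      rw [mul_assoc, ← Complex.exp_add, add_neg_cancel, Complex.exp_zero, mul_one]
    have h2 := congrArg Complex.re h1
    rw [Finset.sum_mul, Complex.re_sum, Complex.ofReal_re] at h2
    have hterm : ∀ j : Fin N, (Complex.exp (Complex.I * (θ t₀ j:ℂ))
        * Complex.exp (-(Complex.I * (φ₀:ℂ)))).re = c j := by
      intro j
      rw [← Complex.exp_add]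
      have : Complex.I * (θ t₀ j:ℂ) + -(Complex.I * (φ₀:ℂ))
          = ((θ t₀ j - φ₀ : ℝ):ℂ) * Complex.I := by push_cast; ring
      rw [this, Complex.exp_ofReal_mul_I_re]
    rw [Finset.sum_congr rfl (fun j _ => hterm j)] at h2
    have hOP : R = (N:ℝ)⁻¹ * ‖∑ j, Complex.exp (Complex.I * (θ t₀ j : ℂ))‖ := by
      rw [hRdef, orderParam, norm_mul, norm_inv, Complex.norm_natCast]
    have hNne : (N:ℝ) ≠ 0 := ne_of_gt hNpos
    rw [h2, hOP, ← mul_assoc, mul_inv_cancel₀ hNne, one_mul]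
  set p : Fin N → Prop := fun i => ∃ m : ℤ, |θ t₀ i - φ₀ - 2 * Real.pi * (m : ℝ)| ≤ β with hp
  set A : Finset (Fin N) := Finset.univ.filter p with hAdef
  set Ac : Finset (Fin N) := Finset.univ.filter (fun i => ¬ p i) with hAcdef
  have hcardsplit : A.card + Ac.card = N := by
    rw [hAdef, hAcdef, Finset.card_filter_add_card_filter_not, Finset.card_univ,
      Fintype.card_fin]
  have hncard : ({i : Fin N | ∃ m : ℤ, |θ t₀ i - φ₀ - 2 * Real.pi * (m : ℝ)| ≤ β}.ncard : ℝ)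
      = (A.card : ℝ) := by
    congr 1
    rw [← Set.ncard_coe_finset]
    congr 1
    ext i
    simp [hAdef, hp]
  rw [hncard]
  have hcAc : ∀ i ∈ Ac, c i ≤ Real.cos β := by
    intro i hi
    rw [hAcdef, Finset.mem_filter] at hi
    exact cos_le_cos_of_not_near _ _ hβ0 hβπ hi.2
  have hcle1 : ∀ i, c i ≤ 1 := fun i => Real.cos_le_one _
  have hcge : ∀ i, -1 ≤ c i := fun i => Real.neg_one_le_cos _
  have hcosβlt : Real.cos β < 1 := by
    have := Real.strictAntiOn_cos (Set.mem_Icc.mpr ⟨le_refl 0, hπ.le⟩)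
      (Set.mem_Icc.mpr ⟨hβ0.le, hβπ.le⟩) hβ0
    rwa [Real.cos_zero] at this
  have he : (0:ℝ) < 1 - Real.cos β := by linarith
  have hsplit : ∑ i ∈ A, c i + ∑ i ∈ Ac, c i = ∑ i, c i :=
    Finset.sum_filter_add_sum_filter_not Finset.univ p c
  have haccard : (Ac.card : ℝ) = (N:ℝ) - (A.card : ℝ) := by
    have : (A.card : ℝ) + (Ac.card : ℝ) = (N : ℝ) := by exact_mod_cast hcardsplit
    linarith
  clear_value c s2 R A Ac
  rcases hcond with hcond1 | hcond2
  · -- first condition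
    have hAsum : ∑ i ∈ A, c i ≤ (A.card : ℝ) := by
      calc ∑ i ∈ A, c i ≤ ∑ _i ∈ A, (1:ℝ) := Finset.sum_le_sum (fun i _ => hcle1 i)
        _ = (A.card : ℝ) := by simp
    have hAcsum : ∑ i ∈ Ac, c i ≤ (Ac.card : ℝ) * Real.cos β := by
      calc ∑ i ∈ Ac, c i ≤ ∑ _i ∈ Ac, Real.cos β := Finset.sum_le_sum hcAc
        _ = (Ac.card : ℝ) * Real.cos β := by rw [Finset.sum_const, nsmul_eq_mul]
    have hNR : (N:ℝ) * R₀ ≤ (A.card : ℝ) + ((N:ℝ) - (A.card:ℝ)) * Real.cos β := by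
      have h1 : (N:ℝ) * R₀ ≤ (N:ℝ) * R := by nlinarith
      rw [← hsumc] at h1
      rw [← haccard]
      linarith
    nlinarith [hNR, hcond1, he, hNpos]
  · -- second condition
    set e : ℝ := 1 - Real.cos β with hedef
    set Δb : ℝ := freqDiam ν ^ 2 / (4 * κ ^ 2 * R₀ ^ 2) with hΔb
    have hΔbnn : 0 ≤ Δb := by rw [hΔb]; positivity
    have heq2 : (1:ℝ) / 4 * (freqDiam ν / (κ * R₀)) ^ 2 = Δb := by
      rw [hΔb]; ring
    clear_value e Δb
    have hS2 : ∑ i, s2 i ≤ (N:ℝ) * Δb := by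
      rw [heq2] at hΔ
      have := mul_le_mul_of_nonneg_left hΔ hNpos.le
      rw [← mul_assoc, mul_inv_cancel₀ (ne_of_gt hNpos), one_mul] at this
      exact this
    have hkey : ∀ i ∈ Ac, 2 * e ≤ s2 i + e * (1 - c i) := by
      intro i hi
      have h1 := hcAc i hi
      have h2 := hcge i
      have h3 := hpyth i
      have h4 : s2 i + e * (1 - c i) - 2 * e = (1 + c i) * (Real.cos β - c i) := by
        rw [h3, hedef]; ring
      have h5 : (0:ℝ) ≤ (1 + c i) * (Real.cos β - c i) :=
        mul_nonneg (by linarith) (by linarith)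
      linarith
    have hsumAc : 2 * e * (Ac.card : ℝ) ≤ ∑ i ∈ Ac, (s2 i + e * (1 - c i)) := by
      calc 2 * e * (Ac.card : ℝ) = ∑ _i ∈ Ac, 2 * e := by rw [Finset.sum_const, nsmul_eq_mul]; ring
        _ ≤ ∑ i ∈ Ac, (s2 i + e * (1 - c i)) := Finset.sum_le_sum hkey
    have hnonneg : ∀ i, 0 ≤ s2 i + e * (1 - c i) := by
      intro i
      have h1 : (0:ℝ) ≤ s2 i := by
        have := sq_nonneg (Real.sin (θ t₀ i - φ₀))
        simpa [hs2] using this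
      have h2 := hcle1 i
      have h3 : (0:ℝ) ≤ e * (1 - c i) := mul_nonneg he.le (by linarith)
      linarith
    have hsub : ∑ i ∈ Ac, (s2 i + e * (1 - c i)) ≤ ∑ i, (s2 i + e * (1 - c i)) :=
      Finset.sum_le_sum_of_subset_of_nonneg (Finset.subset_univ Ac)
        (fun i _ _ => hnonneg i)
    have hsumall : ∑ i, (s2 i + e * (1 - c i)) = (∑ i, s2 i) + e * ((N:ℝ) - (N:ℝ) * R) := by
      rw [Finset.sum_add_distrib, ← Finset.mul_sum, Finset.sum_sub_distrib, hsumc]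
      simp [Finset.card_univ]
    have hchain : 2 * e * (Ac.card : ℝ) ≤ (N:ℝ) * Δb + e * ((N:ℝ) - (N:ℝ) * R₀) := by
      have hRR : e * ((N:ℝ) - (N:ℝ) * R) ≤ e * ((N:ℝ) - (N:ℝ) * R₀) := by
        apply mul_le_mul_of_nonneg_left _ he.le
        have h6 := mul_le_mul_of_nonneg_left hR hNpos.le
        linarith
      calc 2 * e * (Ac.card : ℝ) ≤ ∑ i, (s2 i + e * (1 - c i)) := le_trans hsumAc hsub
        _ = (∑ i, s2 i) + e * ((N:ℝ) - (N:ℝ) * R) := hsumall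
        _ ≤ (N:ℝ) * Δb + e * ((N:ℝ) - (N:ℝ) * R₀) := by linarith [hS2, hRR]
    have hcond2' : Δb ≤ e * (1 + R₀ - 2 * γ) := by
      have h4 : Δb * (1 / e) = Δb / e := by ring
      rw [h4] at hcond2
      have h3 : Δb / e ≤ 1 + R₀ - 2 * γ := by linarith
      have h5 := (div_le_iff₀ he).mp h3
      linarith
    have hNΔb : (N:ℝ) * Δb ≤ (N:ℝ) * (e * (1 + R₀ - 2 * γ)) :=
      mul_le_mul_of_nonneg_left hcond2' hNpos.le
    have hstep : 2 * e * (Ac.card : ℝ) ≤ 2 * e * ((N:ℝ) - γ * N) := by linarith [hchain, hNΔb]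
    have hac : (Ac.card : ℝ) ≤ (N:ℝ) - γ * N := by
      have h2e : (0:ℝ) < 2 * e := by linarith
      exact le_of_mul_le_mul_left hstep h2e
    linarith [haccard, hac]
end

section
/- Let 0 < R₀ ≤ 1, let D ≥ 0, and let κ > 1.6·D/R₀². Define γ := 0.5 + (0.35/0.94)·R₀ and β := arccos(1 − (0.4/0.94)·R₀) if 0 < R₀ ≤ 0.94, and γ := 1 − 2.5·(1−R₀) and β := arccos(0.6) if 0.94 < R₀ ≤ 1. Then the following five conditions all hold: (a) 1/2 < γ ≤ 1; (b) 0 < β and cos β > 1/γ − 1; (c) κ > D/(2·sin β·(γ·cos β − (1−γ))); (d) either R₀ ≥ γ + (1−γ)·cos β, or 2γ + (D²/(4κ²R₀²))·(1/(1−cos β)) ≤ 1 + R₀; (e) D/κ < ((2γ−1)^{3/2}/√(2γ))·((2−γ)/(√(γ/2)+(1−γ))). -/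
private lemma le_of_sq_le_sq'' (a b : ℝ) (ha : 0 ≤ a) (hb : 0 ≤ b) (h : a^2 ≤ b^2) : a ≤ b := by
  calc a = Real.sqrt (a^2) := (Real.sqrt_sq ha).symm
    _ ≤ Real.sqrt (b^2) := Real.sqrt_le_sqrt h
    _ = b := Real.sqrt_sq hb

private lemma key_id (γ s v : ℝ) (hs2 : s^2 = 2*γ-1) (hv2 : v^2 = γ/2)
    (hv : 0 < v) (hv1 : v < 1) :
    s^3/(2*v)*((2-γ)/(v+(1-γ))) = s*(2*v-1)*(1+v)/v := by
  have hden : 0 < v + (1-γ) := by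
    nlinarith [mul_pos (show 0 < 1-v by linarith) (show 0 < 2*v+1 by linarith)]
  field_simp
  linear_combination (s*(2-γ)) * hs2 - (s*(4*v+6-4*γ)) * hv2

private lemma cubic_bound (t : ℝ) (h1 : 0.94 ≤ t) (h2 : t ≤ 1) :
    t^2*0.7072 ≤ ((2.7*t-1.71)*(1.8*t-1.391))*(0.9*t+0.8045)*1.6 := by
  nlinarith [show (0:ℝ) ≤ t - 0.94 by linarith, sq_nonneg (t-0.94),
    mul_nonneg (sq_nonneg (t-0.94)) (show (0:ℝ) ≤ t - 0.94 by linarith)]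

private lemma sqb1 (t : ℝ) (h1 : 0.94 ≤ t) (h2 : t ≤ 1) :
    (2.7*t-1.71)^2 ≤ 2*(5/2*t-3/2)-1 := by
  nlinarith [mul_nonneg (show (0:ℝ) ≤ t - 0.94 by linarith) (show (0:ℝ) ≤ 1 - t by linarith)]

private lemma sqb2 (t : ℝ) (h1 : 0.94 ≤ t) (h2 : t ≤ 1) :
    (0.9*t-0.1955)^2 ≤ (5/2*t-3/2)/2 := by
  nlinarith [mul_nonneg (show (0:ℝ) ≤ t - 0.94 by linarith) (show (0:ℝ) ≤ 1 - t by linarith)]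

private lemma c2key (t : ℝ) (h1 : 0.94 ≤ t) (h2 : t ≤ 1) :
    t^2 ≤ 2.56*(1.6*(5/2*t-3/2)-1) := by
  nlinarith [mul_nonneg (show (0:ℝ) ≤ t - 0.94 by linarith) (show (0:ℝ) ≤ 1 - t by linarith)]

set_option maxHeartbeats 4000000

/-- Lemma 5.3 (verification of the parameter choice): for `0 < R₀ ≤ 1`, `D ≥ 0`,
`κ > 1.6 D/R₀²`, with `γ = 0.5 + (0.35/0.94) R₀`, `β = arccos(1 − (0.4/0.94) R₀)`
when `R₀ ≤ 0.94` and `γ = 1 − 2.5(1−R₀)`, `β = arccos 0.6` when `R₀ > 0.94`,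
conditions (a)-(e) of (A.1) all hold. -/
theorem parameter_choice_valid (R₀ D κ γ β : ℝ)
    (hR₀pos : 0 < R₀) (hR₀le : R₀ ≤ 1) (hD : 0 ≤ D)
    (hκ : 1.6 * D / R₀ ^ 2 < κ)
    (hsmall : R₀ ≤ 0.94 →
      γ = 0.5 + 0.35 / 0.94 * R₀ ∧ β = Real.arccos (1 - 0.4 / 0.94 * R₀))
    (hbig : 0.94 < R₀ →
      γ = 1 - 2.5 * (1 - R₀) ∧ β = Real.arccos 0.6) :
    -- (a)
    (1 / 2 < γ ∧ γ ≤ 1) ∧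
    -- (b)  β ∈ (0, arccos(1/γ − 1))
    (0 < β ∧ 1 / γ - 1 < Real.cos β) ∧
    -- (c)
    (D / (2 * Real.sin β * (γ * Real.cos β - (1 - γ))) < κ) ∧
    -- (d)
    (γ + (1 - γ) * Real.cos β ≤ R₀ ∨
      2 * γ + D ^ 2 / (4 * κ ^ 2 * R₀ ^ 2) * (1 / (1 - Real.cos β)) ≤ 1 + R₀) ∧
    -- (e)
    (D / κ < (2 * γ - 1) ^ ((3 : ℝ) / 2) / Real.sqrt (2 * γ) *
      ((2 - γ) / (Real.sqrt (γ / 2) + (1 - γ)))) := by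
  have ht2 : (0:ℝ) < R₀^2 := by positivity
  have hκ' : 1.6 * D < κ * R₀^2 := by rw [div_lt_iff₀ ht2] at hκ; linarith
  have hκ0 : 0 < κ := lt_of_le_of_lt (by positivity) hκ
  have hDκ : D / κ < R₀^2/1.6 := by
    rw [div_lt_iff₀ hκ0, div_mul_eq_mul_div, lt_div_iff₀ (by norm_num : (0:ℝ) < 1.6)]
    nlinarith
  clear hκ
  by_cases hcase : R₀ ≤ 0.94
  · -- Case 1 : R₀ ≤ 0.94
    obtain ⟨hγ0, hβ0⟩ := hsmall hcase
    clear hsmall hbig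
    have h94 : R₀ ≤ 0.94 := hcase
    have hγ : γ = 1/2 + 35/94*R₀ := by rw [hγ0]; norm_num
    clear hγ0
    have hγ1 : 1/2 < γ := by nlinarith
    have hγ2 : γ ≤ 0.85 := by nlinarith
    have hc : Real.cos β = 1 - 20/47*R₀ := by
      rw [hβ0, Real.cos_arccos (by nlinarith) (by nlinarith)]
      norm_num
    have hσ2 : Real.sin β ^ 2 = 1 - Real.cos β ^ 2 := by
      linarith [Real.sin_sq_add_cos_sq β]
    have hσpos : 0 < Real.sin β := by
      rw [hβ0, Real.sin_arccos]
      apply Real.sqrt_pos.mpr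
      nlinarith
    refine ⟨⟨hγ1, by linarith⟩, ⟨?_, ?_⟩, ?_, ?_, ?_⟩
    · -- (b1)
      rw [hβ0]; exact Real.arccos_pos.mpr (by nlinarith)
    · -- (b2)
      have hγpos : 0 < γ := by linarith
      have h1 : (1:ℝ)/γ < Real.cos β + 1 := by
        rw [div_lt_iff₀ hγpos, hc, hγ]
        nlinarith [mul_pos hR₀pos (show (0:ℝ) < 25/47 - 350/2209*R₀ by nlinarith)]
      linarith
    · -- (c)
      have hP : 18/47*R₀ ≤ γ * Real.cos β - (1 - γ) := by
        rw [hc, hγ]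
        nlinarith [mul_nonneg hR₀pos.le (show (0:ℝ) ≤ 7/47 - 350/2209*R₀ by nlinarith)]
      have hPpos : 0 < γ * Real.cos β - (1-γ) := lt_of_lt_of_le (by positivity) hP
      have hσlb : 0.82*R₀ ≤ Real.sin β := by
        apply le_of_sq_le_sq'' _ _ (by positivity) hσpos.le
        rw [hσ2, hc]
        nlinarith [mul_nonneg hR₀pos.le (show (0:ℝ) ≤ 40/47 - 0.85348*R₀ by nlinarith)]
      have hden : 0 < 2 * Real.sin β * (γ * Real.cos β - (1 - γ)) := by
        have := mul_pos hσpos hPpos; nlinarith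
      rw [div_lt_iff₀ hden]
      have hkey : R₀^2 ≤ 1.6*(2 * Real.sin β * (γ * Real.cos β - (1 - γ))) := by
        nlinarith [mul_le_mul hσlb hP (by positivity) (le_trans (by positivity) hσlb)]
      nlinarith [mul_le_mul_of_nonneg_left hkey hκ0.le]
    · -- (d)
      right
      have hval : 1 - Real.cos β = 20/47*R₀ := by rw [hc]; ring
      rw [hval, div_mul_div_comm, mul_one]
      have hAB : 0 < 4*κ^2*R₀^2*(20/47*R₀) := by positivity
      have hD2 : D^2/(4*κ^2*R₀^2*(20/47*R₀)) ≤ 12/47*R₀ := by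
        rw [div_le_iff₀ hAB]
        nlinarith [mul_le_mul hκ'.le hκ'.le (by positivity) (by positivity), sq_nonneg D]
      linarith [hD2]
    · -- (e)
      clear hσ2 hσpos hc hβ0
      set s := Real.sqrt (2*γ - 1) with hs_def
      set v := Real.sqrt (γ/2) with hv_def
      have hs2 : s^2 = 2*γ-1 := Real.sq_sqrt (by linarith)
      have hv2 : v^2 = γ/2 := Real.sq_sqrt (by linarith)
      have hspos : 0 < s := Real.sqrt_pos.mpr (by linarith)
      have hvpos : 0 < v := Real.sqrt_pos.mpr (by linarith)
      have hv1 : v < 1 := by nlinarith [hv2, hvpos]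
      have h2γ : Real.sqrt (2*γ) = 2*v := by
        rw [show (2*γ) = 2^2*(γ/2) by ring, Real.sqrt_mul (by norm_num), Real.sqrt_sq (by norm_num)]
      have hrpow : (2*γ-1)^((3:ℝ)/2) = s^3 := by
        rw [show ((3:ℝ)/2) = (1/2)*3 by norm_num,
          Real.rpow_mul (by linarith : (0:ℝ) ≤ 2*γ-1), ← Real.sqrt_eq_rpow,
          show ((3:ℝ)) = ((3:ℕ):ℝ) by norm_num, Real.rpow_natCast]
      rw [hrpow, h2γ, key_id γ s v hs2 hv2 hvpos hv1]
      refine lt_of_lt_of_le hDκ ?_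
      rw [div_le_div_iff₀ (by norm_num) hvpos]
      have hvub : v ≤ 0.652 := le_of_sq_le_sq'' _ _ hvpos.le (by norm_num)
        (by rw [hv2, hγ]; nlinarith)
      have hvlb : 1/2 ≤ v := le_of_sq_le_sq'' _ _ (by norm_num) hvpos.le
        (by rw [hv2]; nlinarith)
      have hslb : 0.86*R₀ ≤ s := by
        apply le_of_sq_le_sq'' _ _ (by positivity) hspos.le
        rw [hs2, hγ]
        nlinarith [mul_nonneg hR₀pos.le (show (0:ℝ) ≤ 35/47 - 0.7396*R₀ by linarith)]
      have h2v1 : 0.32*R₀ ≤ 2*v-1 := by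
        have hq := mul_nonneg (show (0:ℝ) ≤ 2*v-1 by linarith)
          (show (0:ℝ) ≤ 1.304 - 2*v by linarith)
        nlinarith [hq, hv2, hγ]
      have hm1 : (0.86*R₀)*(0.32*R₀) ≤ s*(2*v-1) :=
        mul_le_mul hslb h2v1 (by positivity) (le_trans (by positivity) hslb)
      have hm2 : ((0.86*R₀)*(0.32*R₀))*1.5 ≤ (s*(2*v-1))*(1+v) :=
        mul_le_mul hm1 (by linarith) (by norm_num) (le_trans (by positivity) hm1)
      have hcq : R₀^2*0.652 ≤ ((0.86*R₀)*(0.32*R₀))*1.5*1.6 := by nlinarith [sq_nonneg R₀]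
      nlinarith [hm2, hcq, mul_le_mul_of_nonneg_left hvub (sq_nonneg R₀)]
  · -- Case 2 : 0.94 < R₀
    push_neg at hcase
    obtain ⟨hγ0, hβ0⟩ := hbig hcase
    clear hsmall hbig
    have h94 : (0.94:ℝ) < R₀ := hcase
    have hγ : γ = 5/2*R₀ - 3/2 := by rw [hγ0]; ring
    clear hγ0
    have hγ1 : 1/2 < γ := by nlinarith
    have hγ2 : γ ≤ 1 := by nlinarith
    have hc : Real.cos β = 0.6 := by
      rw [hβ0, Real.cos_arccos (by norm_num) (by norm_num)]
    have hσpos : 0 < Real.sin β := by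
      rw [hβ0, Real.sin_arccos]
      apply Real.sqrt_pos.mpr; norm_num
    have hσ2 : Real.sin β ^ 2 = 1 - Real.cos β ^ 2 := by
      linarith [Real.sin_sq_add_cos_sq β]
    have hσ : Real.sin β = 0.8 := by
      have h1 : Real.sin β ≤ 0.8 := le_of_sq_le_sq'' _ _ hσpos.le (by norm_num)
        (by rw [hσ2, hc]; norm_num)
      have h2 : (0.8:ℝ) ≤ Real.sin β := le_of_sq_le_sq'' _ _ (by norm_num) hσpos.le
        (by rw [hσ2, hc]; norm_num)
      linarith
    refine ⟨⟨hγ1, hγ2⟩, ⟨?_, ?_⟩, ?_, ?_, ?_⟩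
    · -- (b1)
      rw [hβ0]; exact Real.arccos_pos.mpr (by norm_num)
    · -- (b2)
      have hγpos : 0 < γ := by linarith
      have h1 : (1:ℝ)/γ < Real.cos β + 1 := by
        rw [div_lt_iff₀ hγpos, hc]
        nlinarith
      linarith
    · -- (c)
      rw [hσ, hc]
      have hden : 0 < 2 * (0.8:ℝ) * (γ * 0.6 - (1 - γ)) := by nlinarith
      rw [div_lt_iff₀ hden]
      have hkey : R₀^2 ≤ 1.6*(2 * (0.8:ℝ) * (γ * 0.6 - (1 - γ))) := by
        have := c2key R₀ h94.le hR₀le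
        nlinarith [this, hγ]
      nlinarith [mul_le_mul_of_nonneg_left hkey hκ0.le]
    · -- (d)
      left
      rw [hc]; nlinarith
    · -- (e)
      clear hσ2 hσpos hc hσ hβ0
      set s := Real.sqrt (2*γ - 1) with hs_def
      set v := Real.sqrt (γ/2) with hv_def
      have hs2 : s^2 = 2*γ-1 := Real.sq_sqrt (by linarith)
      have hv2 : v^2 = γ/2 := Real.sq_sqrt (by linarith)
      have hspos : 0 < s := Real.sqrt_pos.mpr (by linarith)
      have hvpos : 0 < v := Real.sqrt_pos.mpr (by linarith)
      have hv1 : v < 1 := by nlinarith [hv2, hvpos]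
      have h2γ : Real.sqrt (2*γ) = 2*v := by
        rw [show (2*γ) = 2^2*(γ/2) by ring, Real.sqrt_mul (by norm_num), Real.sqrt_sq (by norm_num)]
      have hrpow : (2*γ-1)^((3:ℝ)/2) = s^3 := by
        rw [show ((3:ℝ)/2) = (1/2)*3 by norm_num,
          Real.rpow_mul (by linarith : (0:ℝ) ≤ 2*γ-1), ← Real.sqrt_eq_rpow,
          show ((3:ℝ)) = ((3:ℕ):ℝ) by norm_num, Real.rpow_natCast]
      rw [hrpow, h2γ, key_id γ s v hs2 hv2 hvpos hv1]
      refine lt_of_lt_of_le hDκ ?_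
      rw [div_le_div_iff₀ (by norm_num) hvpos]
      have hvub : v ≤ 0.7072 := le_of_sq_le_sq'' _ _ hvpos.le (by norm_num)
        (by rw [hv2, hγ]; nlinarith)
      have hslb : 2.7*R₀ - 1.71 ≤ s := by
        apply le_of_sq_le_sq'' _ _ (by nlinarith) hspos.le
        rw [hs2, hγ]
        exact sqb1 R₀ h94.le hR₀le
      have hvlb : 0.9*R₀ - 0.1955 ≤ v := by
        apply le_of_sq_le_sq'' _ _ (by nlinarith) hvpos.le
        rw [hv2, hγ]
        exact sqb2 R₀ h94.le hR₀le
      have hApos : (0:ℝ) ≤ 2.7*R₀-1.71 := by nlinarith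
      have hBpos : (0:ℝ) ≤ 1.8*R₀-1.391 := by nlinarith
      have h2v1lb : 1.8*R₀ - 1.391 ≤ 2*v - 1 := by linarith
      have hm1 : (2.7*R₀-1.71)*(1.8*R₀-1.391) ≤ s*(2*v-1) :=
        mul_le_mul hslb h2v1lb hBpos hspos.le
      have hCub : 0.9*R₀+0.8045 ≤ 1+v := by linarith
      have hm2 : ((2.7*R₀-1.71)*(1.8*R₀-1.391))*(0.9*R₀+0.8045) ≤ (s*(2*v-1))*(1+v) :=
        mul_le_mul hm1 hCub (by nlinarith) (le_trans (mul_nonneg hApos hBpos) hm1)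
      have hcubic := cubic_bound R₀ h94.le hR₀le
      nlinarith [hm2, hcubic, mul_le_mul_of_nonneg_left hvub (sq_nonneg R₀)]
end

section
/- Define the Kuramoto vector field F : ℝ^N → ℝ^N by F_i(Θ) = ν_i + (κ/N)·∑_{j=1}^N sin(θ_j − θ_i), and define the order parameter R(Θ) := |(1/N)·∑_{j=1}^N exp(𝕚 θ_j)|. Then the divergence of F satisfies, for every Θ ∈ ℝ^N, ∑_{i=1}^N (∂F_i/∂θ_i)(Θ) = κ·(1 − N·R(Θ)²). -/
lemma normSq_sum_exp (N : ℕ) (x : Fin N → ℝ) :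
    Complex.normSq (∑ j, Complex.exp (Complex.I * (x j : ℂ)))
      = ∑ i, ∑ j, Real.cos (x j - x i) := by
  have h : (∑ j, Complex.exp (Complex.I * (x j : ℂ)))
      * (starRingEnd ℂ) (∑ j, Complex.exp (Complex.I * (x j : ℂ)))
      = ∑ j, ∑ i, Complex.exp (((x j : ℂ) - (x i : ℂ)) * Complex.I) := by
    rw [map_sum, Finset.sum_mul_sum]
    refine Finset.sum_congr rfl fun j _ => Finset.sum_congr rfl fun i _ => ?_
    rw [← Complex.exp_conj, ← Complex.exp_add]
    congr 1
    simp [Complex.conj_I, mul_comm]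
    ring
  have := congrArg Complex.re (Complex.mul_conj (∑ j, Complex.exp (Complex.I * (x j : ℂ))))
  rw [h] at this
  simp only [Complex.ofReal_re] at this
  rw [← this, Complex.re_sum]
  rw [Finset.sum_comm]
  refine Finset.sum_congr rfl fun i _ => ?_
  rw [Complex.re_sum]
  refine Finset.sum_congr rfl fun j _ => ?_
  rw [← Complex.ofReal_sub, Complex.exp_ofReal_mul_I_re]

/-- Divergence identity (6.5) for the Kuramoto vector field:
`∑ᵢ ∂Fᵢ/∂θᵢ = κ (1 − N R(Θ)²)`. -/
theorem kuramoto_divergence (N : ℕ) (hN : 1 ≤ N) (κ : ℝ) (ν : Fin N → ℝ)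
    (F : (Fin N → ℝ) → Fin N → ℝ)
    (hF : ∀ (Θ : Fin N → ℝ) (i : Fin N),
      F Θ i = ν i + κ / N * ∑ j, Real.sin (Θ j - Θ i)) :
    ∀ Θ : Fin N → ℝ,
      ∑ i, deriv (fun s => F (Function.update Θ i s) i) (Θ i)
        = κ * (1 - N * orderParam Θ ^ 2) := by
  intro Θ
  have hN0 : (N : ℝ) ≠ 0 := by positivity
  -- compute each deriv
  have key : ∀ i : Fin N,
      deriv (fun s => F (Function.update Θ i s) i) (Θ i)
        = κ / N * (1 - ∑ j, Real.cos (Θ j - Θ i)) := by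
    intro i
    have hfun : (fun s => F (Function.update Θ i s) i)
        = fun s => ν i + κ / N * ∑ j, (if j = i then 0 else Real.sin (Θ j - s)) := by
      funext s
      rw [hF]
      congr 1
      congr 1
      refine Finset.sum_congr rfl fun j _ => ?_
      rw [Function.update_self]
      by_cases hj : j = i
      · subst hj; simp
      · rw [Function.update_of_ne hj]; simp [hj]
    rw [hfun]
    have hd : HasDerivAt (fun s => ν i + κ / N * ∑ j, (if j = i then 0 else Real.sin (Θ j - s)))
        (κ / N * ∑ j, (if j = i then 0 else -Real.cos (Θ j - Θ i))) (Θ i) := by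
      refine (HasDerivAt.const_mul (κ / N) ?_).const_add (ν i)
      refine HasDerivAt.fun_sum fun j _ => ?_
      by_cases hj : j = i
      · simp [hj]
        exact hasDerivAt_const _ _
      · simp only [hj, if_false]
        have h1 : HasDerivAt (fun s : ℝ => Θ j - s) (-1) (Θ i) :=
          (hasDerivAt_id _).const_sub (Θ j) |>.congr_deriv (by ring) |>.congr_deriv rfl
        have := (Real.hasDerivAt_sin (Θ j - Θ i)).comp (Θ i) h1
        simpa [Function.comp_def] using this
    rw [hd.deriv]
    congr 1
    have : ∀ j ∈ Finset.univ, (if j = i then 0 else -Real.cos (Θ j - Θ i))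
        = (if j = i then Real.cos (Θ j - Θ i) else 0) - Real.cos (Θ j - Θ i) := by
      intro j _; by_cases hj : j = i <;> simp [hj]
    rw [Finset.sum_congr rfl this, Finset.sum_sub_distrib,
      Finset.sum_ite_eq' Finset.univ i (fun j => Real.cos (Θ j - Θ i))]
    simp
  simp_rw [key]
  rw [← Finset.mul_sum, Finset.sum_sub_distrib, Finset.sum_const, Finset.card_univ,
    Fintype.card_fin, nsmul_eq_mul, mul_one]
  have hR : orderParam Θ ^ 2 = ((N:ℝ)^2)⁻¹ * ∑ i, ∑ j, Real.cos (Θ j - Θ i) := by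
    unfold orderParam
    rw [Complex.sq_norm, map_mul, map_inv₀, normSq_sum_exp]
    norm_num [Complex.normSq_natCast]
    left; rw [sq]; ring
  rw [hR]
  field_simp
end

section
/- Let κ > 0, define the Kuramoto vector field F : ℝ^N → ℝ^N by F_i(Θ) = ν_i + (κ/N)·∑_{j=1}^N sin(θ_j − θ_i), and let Θ* ∈ ℝ^N be an equilibrium, F(Θ*) = 0, whose order parameter satisfies R(Θ*) < 1/√N. Then the Jacobian matrix J ∈ ℝ^{N×N} of F at Θ*, with entries J_{ik} = (∂F_i/∂θ_k)(Θ*), has a complex eigenvalue with strictly positive real part; in particular, the equilibrium Θ* is linearly unstable. -/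
private lemma multiset_sum_nonpos {m : Multiset ℝ} (h : ∀ x ∈ m, x ≤ 0) : m.sum ≤ 0 := by
  induction m using Multiset.induction with
  | empty => simp
  | cons a s ih =>
    simp only [Multiset.sum_cons]
    have ha := h a (Multiset.mem_cons_self a s)
    have hs := ih (fun x hx => h x (Multiset.mem_cons_of_mem hx))
    linarith

private lemma mem_spectrum_of_isRoot_charpoly {n : Type*} [Fintype n] [DecidableEq n]
    {K : Type*} [Field K] {M : Matrix n n K} {μ : K} (h : M.charpoly.IsRoot μ) :
    μ ∈ spectrum K M := by
  rw [spectrum.mem_iff, Matrix.isUnit_iff_isUnit_det]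
  have hdet : (algebraMap K (Matrix n n K) μ - M).det = M.charpoly.eval μ := by
    have : (Matrix.charmatrix M).map (Polynomial.evalRingHom μ)
        = algebraMap K (Matrix n n K) μ - M := by
      ext i j
      by_cases hij : i = j
      · subst hij
        simp [Matrix.charmatrix_apply_eq, Matrix.algebraMap_matrix_apply]
      · simp [Matrix.charmatrix_apply_ne _ _ _ hij, Matrix.algebraMap_matrix_apply, hij]
    have hm := RingHom.map_det (Polynomial.evalRingHom μ) M.charmatrix
    rw [← this]
    show ((Polynomial.evalRingHom μ).mapMatrix M.charmatrix).det = _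
    rw [← hm]
    simp [Matrix.charpoly]
  rw [hdet, h.eq_zero]
  simp

/-- Proposition 6.1 (1): for `κ > 0`, any equilibrium of the Kuramoto vector
field whose order parameter is less than `1/√N` is linearly unstable: the
Jacobian of the vector field at the equilibrium has a complex eigenvalue with
strictly positive real part. -/
theorem low_order_parameter_equilibrium_unstable (N : ℕ) (hN : 1 ≤ N)
    (κ : ℝ) (hκ : 0 < κ) (ν : Fin N → ℝ)
    (F : (Fin N → ℝ) → Fin N → ℝ)
    (hF : ∀ (Θ : Fin N → ℝ) (i : Fin N),
      F Θ i = ν i + κ / N * ∑ j, Real.sin (Θ j - Θ i))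
    (Θs : Fin N → ℝ) (heq : ∀ i, F Θs i = 0)
    (hR : orderParam Θs < 1 / Real.sqrt N)
    (J : Matrix (Fin N) (Fin N) ℝ)
    (hJ : ∀ i k : Fin N,
      HasDerivAt (fun s => F (Function.update Θs k s) i) (J i k) (Θs k)) :
    ∃ μ : ℂ, μ ∈ spectrum ℂ (J.map (Complex.ofReal : ℝ → ℂ)) ∧ 0 < μ.re := by
  have hN0 : (0 : ℝ) < N := by exact_mod_cast hN
  have hNne : (N : ℝ) ≠ 0 := ne_of_gt hN0
  -- Diagonal entries of the Jacobian
  have hdiag : ∀ i, J i i = κ / N * (1 - ∑ j, Real.cos (Θs j - Θs i)) := by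
    intro i
    have h1 : HasDerivAt (fun s => F (Function.update Θs i s) i)
        (κ / N * ∑ j, (if j = i then 0 else -Real.cos (Θs j - Θs i))) (Θs i) := by
      have hfun : (fun s => F (Function.update Θs i s) i)
          = fun s => ν i + κ / N * ∑ j, Real.sin (Function.update Θs i s j - s) := by
        funext s
        rw [hF]
        simp [Function.update_self]
      rw [hfun]
      apply HasDerivAt.const_add
      apply HasDerivAt.const_mul
      apply HasDerivAt.fun_sum
      intro j _
      rcases eq_or_ne j i with rfl | hji
      · simpa using hasDerivAt_const (Θs j) (0:ℝ)
      · simp only [if_neg hji]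
        have hupd : (fun s => Real.sin (Function.update Θs i s j - s))
            = fun s => Real.sin (Θs j - s) := by
          funext s; rw [Function.update_of_ne hji]
        rw [hupd]
        have h := (((hasDerivAt_id (Θs i)).const_sub (Θs j)).sin)
        simpa using h
    have h2 := (hJ i i).unique h1
    rw [h2]
    congr 1
    have : ∀ j : Fin N, (if j = i then (0:ℝ) else -Real.cos (Θs j - Θs i))
        = -Real.cos (Θs j - Θs i) + (if j = i then 1 else 0) := by
      intro j
      by_cases h : j = i
      · subst h; simp
      · simp [h]
    rw [Finset.sum_congr rfl (fun j _ => this j), Finset.sum_add_distrib,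
      Finset.sum_ite_eq' Finset.univ i (fun _ => (1:ℝ))]
    simp [Finset.sum_neg_distrib]
    ring
  -- The double cosine sum equals N² R²
  set z : ℂ := ∑ j, Complex.exp (Complex.I * (Θs j : ℂ)) with hz
  have hS : ∑ i, ∑ j, Real.cos (Θs j - Θs i) = Complex.normSq z := by
    have : z * (starRingEnd ℂ) z
        = ∑ i, ∑ j, Complex.exp (Complex.I * ((Θs j : ℂ) - (Θs i : ℂ))) := by
      rw [hz, Finset.sum_mul, Finset.sum_comm]
      congr 1
      funext i
      rw [map_sum, Finset.mul_sum]
      congr 1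
      funext j
      rw [← Complex.exp_conj, ← Complex.exp_add]
      congr 1
      rw [map_mul, Complex.conj_I, Complex.conj_ofReal]
      ring
    have h2 : ((z * (starRingEnd ℂ) z).re : ℝ) = Complex.normSq z := by
      rw [Complex.mul_conj]; simp
    rw [← h2, this]
    rw [Complex.re_sum]
    congr 1
    funext i
    rw [Complex.re_sum]
    congr 1
    funext j
    have : Complex.I * ((Θs j : ℂ) - (Θs i : ℂ)) = ((Θs j - Θs i : ℝ) : ℂ) * Complex.I := by
      push_cast; ring
    rw [this, Complex.exp_ofReal_mul_I_re]
  have horder : orderParam Θs = ‖z‖ / N := by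
    rw [orderParam, norm_mul, ← hz, norm_inv, Complex.norm_natCast]
    ring
  -- N R² < 1
  have hRnonneg : 0 ≤ orderParam Θs := norm_nonneg _
  have hsq : (orderParam Θs)^2 < 1 / N := by
    have := mul_self_lt_mul_self hRnonneg hR
    calc (orderParam Θs)^2 = orderParam Θs * orderParam Θs := sq (orderParam Θs) ▸ by ring
    _ < (1 / Real.sqrt N) * (1 / Real.sqrt N) := this
    _ = 1 / N := by
      rw [div_mul_div_comm, one_mul, Real.mul_self_sqrt (le_of_lt hN0)]
  have hnormSq : Complex.normSq z = (orderParam Θs)^2 * N^2 := by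
    rw [horder]
    rw [div_pow, div_mul_cancel₀ _ (by positivity : ((N:ℝ))^2 ≠ 0), Complex.sq_norm]
  -- Trace is positive
  have htrace : Matrix.trace J = κ * (1 - N * (orderParam Θs)^2) := by
    rw [Matrix.trace]
    simp only [Matrix.diag_apply]
    rw [Finset.sum_congr rfl (fun i _ => hdiag i)]
    rw [← Finset.mul_sum]
    have : ∑ i : Fin N, (1 - ∑ j, Real.cos (Θs j - Θs i))
        = N - ∑ i, ∑ j, Real.cos (Θs j - Θs i) := by
      rw [Finset.sum_sub_distrib]
      simp
    rw [this, hS, hnormSq]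
    field_simp
  have htrpos : 0 < Matrix.trace J := by
    rw [htrace]
    have : N * (orderParam Θs)^2 < 1 := by
      have := mul_lt_mul_of_pos_left hsq hN0
      rwa [mul_one_div, div_self hNne] at this
    nlinarith
  -- Pass to the complex matrix
  set M : Matrix (Fin N) (Fin N) ℂ := J.map (Complex.ofReal : ℝ → ℂ) with hM
  have htraceM : Matrix.trace M = (Complex.ofReal (Matrix.trace J)) := by
    rw [Matrix.trace, Matrix.trace]
    push_cast
    rfl
  have hsum := Matrix.trace_eq_sum_roots_charpoly M
  -- Real part of sum of roots is positive
  have hre : 0 < ((M.charpoly.roots.map Complex.re).sum) := by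
    have : (M.charpoly.roots.map Complex.re).sum = (M.charpoly.roots.sum).re := by
      rw [← Complex.coe_reAddGroupHom, ← AddMonoidHom.map_multiset_sum]
    rw [this, ← hsum, htraceM]
    simpa using htrpos
  by_contra hcon
  push_neg at hcon
  have : (M.charpoly.roots.map Complex.re).sum ≤ 0 := by
    apply multiset_sum_nonpos
    intro x hx
    obtain ⟨μ, hμ, rfl⟩ := Multiset.mem_map.mp hx
    have hmem : μ ∈ spectrum ℂ M :=
      mem_spectrum_of_isRoot_charpoly (Polynomial.isRoot_of_mem_roots hμ)
    exact hcon μ hmem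
  linarith
end
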